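/- arXiv:2407.17051 — 2 statements merged into one kernel-verified Lean document; each statement's English description precedes it below -/
import Mathlib

section
/- Let T be a finite tree with maximum degree at least 3, and let D be the orientation of T obtained by directing all edges away from a fixed leaf u (so every vertex other than u has in-degree exactly 1). Then D is not converse invariant: there exists a tournament T' with f_{T'}(D) ≠ f_{T'}(−D). In fact, D has exactly one source, with out-degree 1, and at least two sinks, so ∑_{sources v} 2^{d⁺(v)} < ∑_{sinks v} 2^{d⁻(v)}. -/
open Finset Polynomial

/-- An oriented graph: loopless, at most one arc between any pair of vertices. -/
def IsOrgraph {V : Type*} (A : V → V → Prop) : Prop :=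
  ∀ u v, A u v → u ≠ v ∧ ¬ A v u

/-- A tournament: loopless, exactly one arc between any two distinct vertices. -/
def IsTournament {W : Type*} (B : W → W → Prop) : Prop :=
  (∀ v, ¬ B v v) ∧ ∀ u v, u ≠ v → (B u v ↔ ¬ B v u)

/-- The number of subdigraphs of `B` isomorphic to `A`: a subdigraph is a pair of a
vertex set and an arc relation contained in `B` with all endpoints in the vertex set. -/
noncomputable def copyCount {V W : Type*} (A : V → V → Prop) (B : W → W → Prop) : ℕ :=
  Nat.card {p : Set W × (W → W → Prop) //
    (∀ a b, p.2 a b → B a b ∧ a ∈ p.1 ∧ b ∈ p.1) ∧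
    ∃ e : V ≃ p.1, ∀ a b, A a b ↔ p.2 (e a : W) (e b : W)}

/-- `A` is converse invariant: every finite tournament contains as many copies of `A`
as of its converse. -/
def ConverseInvariant {V : Type*} (A : V → V → Prop) : Prop :=
  ∀ (W : Type) (_ : Fintype W) (B : W → W → Prop), IsTournament B →
    copyCount A B = copyCount (fun a b => A b a) B

/-- Out-degree. -/
noncomputable def outDeg {V : Type*} (A : V → V → Prop) (u : V) : ℕ :=
  Nat.card {v // A u v}

/-- In-degree. -/
noncomputable def inDeg {V : Type*} (A : V → V → Prop) (u : V) : ℕ :=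
  Nat.card {v // A v u}

/-- The polynomial `P_D(x) = ∑_u (1+x)^{d⁺(u)} (1-x)^{d⁻(u)}`. -/
noncomputable def degPoly {V : Type*} [Fintype V] (A : V → V → Prop) : Polynomial ℤ :=
  ∑ u : V, (1 + X) ^ outDeg A u * (1 - X) ^ inDeg A u

/-- `A` is an orientation of the simple graph `G`. -/
def IsOrientation {V : Type*} (G : SimpleGraph V) (A : V → V → Prop) : Prop :=
  (∀ u v, A u v → ¬ A v u) ∧ ∀ u v, G.Adj u v ↔ (A u v ∨ A v u)


section CC
variable {V : Type*} {W : Type*}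

def EmbSet (A : V → V → Prop) (B : W → W → Prop) : Type _ :=
  {f : V → W // Function.Injective f ∧ ∀ a b, A a b → B (f a) (f b)}

def AutSet (A : V → V → Prop) : Type _ :=
  {σ : V ≃ V // ∀ a b, A a b ↔ A (σ a) (σ b)}

def CopyT (A : V → V → Prop) (B : W → W → Prop) : Type _ :=
  {p : Set W × (W → W → Prop) //
    (∀ a b, p.2 a b → B a b ∧ a ∈ p.1 ∧ b ∈ p.1) ∧
    ∃ e : V ≃ p.1, ∀ a b, A a b ↔ p.2 (e a : W) (e b : W)}

lemma copyCount_eq_card (A : V → V → Prop) (B : W → W → Prop) :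
    copyCount A B = Nat.card (CopyT A B) := rfl

def embToCopy (A : V → V → Prop) (B : W → W → Prop) (f : EmbSet A B) : CopyT A B := by
  refine ⟨(Set.range f.1, fun x y => ∃ a b, A a b ∧ f.1 a = x ∧ f.1 b = y), ?_, ?_⟩
  · rintro x y ⟨a, b, hab, rfl, rfl⟩
    exact ⟨f.2.2 a b hab, Set.mem_range_self a, Set.mem_range_self b⟩
  · refine ⟨Equiv.ofInjective f.1 f.2.1, fun a b => ?_⟩
    constructor
    · intro h; exact ⟨a, b, h, rfl, rfl⟩
    · rintro ⟨a', b', hab, ha, hb⟩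
      simp only [Equiv.ofInjective_apply] at ha hb
      rw [← f.2.1 ha, ← f.2.1 hb]
      exact hab

noncomputable def fiberEquivAut (A : V → V → Prop) (B : W → W → Prop) (p : CopyT A B) :
    {f : EmbSet A B // embToCopy A B f = p} ≃ AutSet A := by
  classical
  set e₀ : V ≃ p.1.1 := p.2.2.choose with he₀def
  have he₀ : ∀ a b, A a b ↔ p.1.2 (e₀ a : W) (e₀ b : W) := p.2.2.choose_spec
  have hBp : ∀ a b, p.1.2 a b → B a b ∧ a ∈ p.1.1 ∧ b ∈ p.1.1 := p.2.1
  refine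
    { toFun := fun f => ?_
      invFun := fun σ => ?_
      left_inv := ?_
      right_inv := ?_ }
  · -- forward
    have hval := congrArg Subtype.val f.2
    have hr : Set.range f.1.1 = p.1.1 := congrArg Prod.fst hval
    have hp : (fun x y => ∃ a b, A a b ∧ f.1.1 a = x ∧ f.1.1 b = y) = p.1.2 :=
      congrArg Prod.snd hval
    refine ⟨((Equiv.ofInjective f.1.1 f.1.2.1).trans (Equiv.setCongr hr)).trans e₀.symm,
      fun a b => ?_⟩
    have key : ∀ a, (e₀ ((((Equiv.ofInjective f.1.1 f.1.2.1).trans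
        (Equiv.setCongr hr)).trans e₀.symm) a) : W) = f.1.1 a := by
      intro a
      simp [Equiv.setCongr, Equiv.subtypeEquivProp]
    constructor
    · intro h
      have h1 : p.1.2 (f.1.1 a) (f.1.1 b) := by
        rw [← hp]; exact ⟨a, b, h, rfl, rfl⟩
      rw [he₀, key, key]
      exact h1
    · intro h
      rw [he₀, key, key, ← hp] at h
      obtain ⟨a', b', hab, ha, hb⟩ := h
      rw [← f.1.2.1 ha, ← f.1.2.1 hb]
      exact hab
  · -- backward
    refine ⟨⟨fun a => (e₀ (σ.1 a) : W), ⟨?_, ?_⟩⟩, ?_⟩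
    · intro a b h
      exact σ.1.injective (e₀.injective (Subtype.val_injective h))
    · intro a b hab
      exact (hBp _ _ ((he₀ _ _).mp ((σ.2 a b).mp hab))).1
    · -- embToCopy = p
      apply Subtype.ext
      refine Prod.ext ?_ ?_
      · ext x
        simp only [embToCopy, Set.mem_range]
        constructor
        · rintro ⟨a, rfl⟩; exact (e₀ (σ.1 a)).2
        · intro hx
          exact ⟨σ.1.symm (e₀.symm ⟨x, hx⟩), by simp⟩
      · funext x y
        apply propext
        constructor
        · rintro ⟨a, b, hab, rfl, rfl⟩
          exact (he₀ _ _).mp ((σ.2 a b).mp hab)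
        · intro hxy
          obtain ⟨-, hx, hy⟩ := hBp _ _ hxy
          refine ⟨σ.1.symm (e₀.symm ⟨x, hx⟩), σ.1.symm (e₀.symm ⟨y, hy⟩), ?_, by simp, by simp⟩
          rw [σ.2, he₀]
          simpa using hxy
  · -- left inverse
    intro f
    apply Subtype.ext
    apply Subtype.ext
    funext a
    simp [Equiv.setCongr, Equiv.subtypeEquivProp]
  · -- right inverse
    intro σ
    apply Subtype.ext
    apply Equiv.ext
    intro a
    apply e₀.injective
    apply Subtype.val_injective
    simp [Equiv.setCongr, Equiv.subtypeEquivProp]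

lemma card_embSet_eq [Finite V] [Finite W] (A : V → V → Prop) (B : W → W → Prop) :
    Nat.card (EmbSet A B) = copyCount A B * Nat.card (AutSet A) := by
  classical
  rw [copyCount_eq_card]
  rw [← Nat.card_congr (Equiv.sigmaFiberEquiv (embToCopy A B))]
  haveI : Finite (CopyT A B) := by
    unfold CopyT
    infer_instance
  haveI : Finite (EmbSet A B) := by
    unfold EmbSet
    infer_instance
  letI : Fintype (CopyT A B) := Fintype.ofFinite _
  letI : ∀ p : CopyT A B, Fintype {f : EmbSet A B // embToCopy A B f = p} := fun p =>
    Fintype.ofFinite _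
  haveI : Finite (AutSet A) := by unfold AutSet; infer_instance
  letI : Fintype (AutSet A) := Fintype.ofFinite _
  rw [Nat.card_eq_fintype_card, Fintype.card_sigma]
  have : ∀ p : CopyT A B, Fintype.card {f : EmbSet A B // embToCopy A B f = p}
      = Nat.card (AutSet A) := by
    intro p
    rw [← Nat.card_eq_fintype_card]
    exact Nat.card_congr (fiberEquivAut A B p)
  rw [Finset.sum_congr rfl (fun p _ => this p), Finset.sum_const,
    Finset.card_univ, smul_eq_mul, Nat.card_eq_fintype_card (α := CopyT A B)]

def autFlip (A : V → V → Prop) : AutSet A ≃ AutSet (fun a b => A b a) where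
  toFun := fun σ => ⟨σ.1, fun a b => σ.2 b a⟩
  invFun := fun σ => ⟨σ.1, fun a b => σ.2 b a⟩
  left_inv := fun σ => rfl
  right_inv := fun σ => rfl

lemma autSet_pos [Finite V] (A : V → V → Prop) : 0 < Nat.card (AutSet A) := by
  haveI : Finite (AutSet A) := by unfold AutSet; infer_instance
  haveI : Nonempty (AutSet A) := ⟨⟨Equiv.refl V, fun a b => Iff.rfl⟩⟩
  exact Nat.card_pos

end CC


/-- The tournament: a transitive chain on positions `0..n-4` dominating a 3-cycle on
positions `n-3, n-2, n-1`. -/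
def TB (n : ℕ) (i j : Fin n) : Prop :=
  if n - 3 ≤ i.val ∧ n - 3 ≤ j.val then (j.val = i.val + 1 ∨ j.val + 2 = i.val)
  else i.val < j.val

lemma TB_tournament {n : ℕ} (hn : 4 ≤ n) : IsTournament (TB n) := by
  constructor
  · intro v
    unfold TB
    split_ifs with h
    · omega
    · omega
  · intro i j hne
    have hv : i.val ≠ j.val := fun h => hne (Fin.ext h)
    have hi := i.2
    have hj := j.2
    unfold TB
    by_cases h1 : n - 3 ≤ i.val ∧ n - 3 ≤ j.val
    · rw [if_pos h1, if_pos ⟨h1.2, h1.1⟩]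
      omega
    · rw [if_neg h1, if_neg (fun h => h1 ⟨h.2, h.1⟩)]
      omega

lemma TB_chain_lt {n : ℕ} {i j : Fin n} (hj : j.val < n - 3) (hij : TB n i j) :
    i.val < j.val := by
  unfold TB at hij
  rw [if_neg (fun h => by omega)] at hij
  exact hij

lemma TB_c3 {n : ℕ} {i j : Fin n} (hi : n - 3 ≤ i.val) (hj : n - 3 ≤ j.val) (hij : TB n i j) :
    j.val = i.val + 1 ∨ j.val + 2 = i.val := by
  unfold TB at hij
  rwa [if_pos ⟨hi, hj⟩] at hij

lemma TB_intro_chain {n : ℕ} {i j : Fin n} (hij : i.val < j.val) (hi : i.val < n - 3) :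
    TB n i j := by
  unfold TB
  rw [if_neg (fun h => by omega)]
  exact hij

lemma TB_intro_c3 {n : ℕ} {i j : Fin n} (hi : n - 3 ≤ i.val) (hj : n - 3 ≤ j.val)
    (h : j.val = i.val + 1 ∨ j.val + 2 = i.val) : TB n i j := by
  unfold TB
  rw [if_pos ⟨hi, hj⟩]
  exact h

section HM

variable {V : Type} [Fintype V] [DecidableEq V]

/-- position of the `k`-th (mod 3) vertex of the 3-cycle -/
def slotv (n k : ℕ) : ℕ := n - 3 + k % 3

/-- The "reversed" placement of `V` into `Fin n`: `u, r` and the `τ = 0` vertex go to the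
3-cycle (with rotation `c`), everything else in reversed `τ` order on the chain. -/
def hmap (n : ℕ) (u r : V) (c : ℕ) (τ : V → ℕ) (v : V) : ℕ :=
  if v = u then slotv n (c + 2) else if v = r then slotv n (c + 1)
  else if τ v = 0 then slotv n c else n - 3 - τ v

lemma hmap_lt (n : ℕ) (hn : 4 ≤ n) (u r : V) (c : ℕ) (τ : V → ℕ) (v : V) :
    hmap n u r c τ v < n := by
  unfold hmap slotv
  have h2 : (c+2) % 3 < 3 := Nat.mod_lt _ (by omega)
  have h1 : (c+1) % 3 < 3 := Nat.mod_lt _ (by omega)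
  have h0 : c % 3 < 3 := Nat.mod_lt _ (by omega)
  split_ifs <;> omega

def hmFin (n : ℕ) (hn : 4 ≤ n) (u r : V) (c : ℕ) (τ : V → ℕ) : V → Fin n :=
  fun v => ⟨hmap n u r c τ v, hmap_lt n hn u r c τ v⟩

lemma TB_slot {n : ℕ} (hn : 4 ≤ n) (k : ℕ) {i j : Fin n}
    (hi : i.val = slotv n k) (hj : j.val = slotv n (k + 1)) : TB n i j := by
  apply TB_intro_c3 (by unfold slotv at hi; omega) (by unfold slotv at hj; omega)
  unfold slotv at hi hj
  omega


lemma hmap_u (n : ℕ) (u r : V) (c : ℕ) (τ : V → ℕ) :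
    hmap n u r c τ u = slotv n (c + 2) := by
  unfold hmap; rw [if_pos rfl]

lemma hmap_r (n : ℕ) (u r : V) (hur : u ≠ r) (c : ℕ) (τ : V → ℕ) :
    hmap n u r c τ r = slotv n (c + 1) := by
  unfold hmap; rw [if_neg (Ne.symm hur), if_pos rfl]

lemma hmap_F0 (n : ℕ) (u r : V) (c : ℕ) (τ : V → ℕ) {v : V}
    (h1 : v ≠ u) (h2 : v ≠ r) (h0 : τ v = 0) : hmap n u r c τ v = slotv n c := by
  unfold hmap; rw [if_neg h1, if_neg h2, if_pos h0]

lemma hmap_F1 (n : ℕ) (u r : V) (c : ℕ) (τ : V → ℕ) {v : V}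
    (h1 : v ≠ u) (h2 : v ≠ r) (h0 : τ v ≠ 0) : hmap n u r c τ v = n - 3 - τ v := by
  unfold hmap; rw [if_neg h1, if_neg h2, if_neg h0]

theorem hm_emb (n : ℕ) (hn : 4 ≤ n) (hcard : Fintype.card V = n)
    (A : V → V → Prop) (u r : V)
    (hNoInU : ∀ w, ¬ A w u)
    (hUr : A u r)
    (hUout : ∀ x, A u x → x = r)
    (hParU : ∀ p q v, A p v → A q v → p = q)
    (c : ℕ) (τ : V → ℕ)
    (hτb : ∀ v, v ≠ u → v ≠ r → 1 ≤ τ v → τ v ≤ n - 3)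
    (hτinj : ∀ v w, v ≠ u → v ≠ r → w ≠ u → w ≠ r → τ v = τ w → v = w)
    (hτext : ∀ a b, a ≠ u → a ≠ r → b ≠ u → b ≠ r → A a b → τ a < τ b) :
    Function.Injective (hmFin n hn u r c τ) ∧
      (∀ a b, A b a → TB n (hmFin n hn u r c τ a) (hmFin n hn u r c τ b)) := by
  have hur : u ≠ r := by
    intro h
    exact hNoInU u (h ▸ hUr)
  have h2m : (c + 2) % 3 < 3 := Nat.mod_lt _ (by omega)
  have h1m : (c + 1) % 3 < 3 := Nat.mod_lt _ (by omega)
  have h0m : c % 3 < 3 := Nat.mod_lt _ (by omega)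
  have hmodne1 : (c + 2) % 3 ≠ (c + 1) % 3 := by omega
  have hmodne2 : (c + 2) % 3 ≠ c % 3 := by omega
  have hmodne3 : (c + 1) % 3 ≠ c % 3 := by omega
  constructor
  · intro v w hvw
    have hvw' : hmap n u r c τ v = hmap n u r c τ w := congrArg Fin.val hvw
    have genval : ∀ z, z ≠ u → z ≠ r →
        (hmap n u r c τ z = slotv n c ∧ τ z = 0) ∨
        (hmap n u r c τ z = n - 3 - τ z ∧ 1 ≤ τ z ∧ τ z ≤ n - 3) := by
      intro z hz1 hz2
      by_cases h0 : τ z = 0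
      · exact Or.inl ⟨hmap_F0 n u r c τ hz1 hz2 h0, h0⟩
      · exact Or.inr ⟨hmap_F1 n u r c τ hz1 hz2 h0, by omega, hτb z hz1 hz2 (by omega)⟩
    by_cases hv1 : v = u <;> by_cases hw1 : w = u
    · rw [hv1, hw1]
    · exfalso
      rw [hv1, hmap_u] at hvw'
      by_cases hw2 : w = r
      · rw [hw2, hmap_r n u r hur] at hvw'
        unfold slotv at hvw'; omega
      · rcases genval w hw1 hw2 with ⟨h, _⟩ | ⟨h, h1, h2⟩ <;>
          (rw [h] at hvw'; unfold slotv at hvw'; omega)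
    · exfalso
      rw [hw1, hmap_u] at hvw'
      by_cases hv2 : v = r
      · rw [hv2, hmap_r n u r hur] at hvw'
        unfold slotv at hvw'; omega
      · rcases genval v hv1 hv2 with ⟨h, _⟩ | ⟨h, h1, h2⟩ <;>
          (rw [h] at hvw'; unfold slotv at hvw'; omega)
    · by_cases hv2 : v = r <;> by_cases hw2 : w = r
      · rw [hv2, hw2]
      · exfalso
        rw [hv2, hmap_r n u r hur] at hvw'
        rcases genval w hw1 hw2 with ⟨h, _⟩ | ⟨h, h1, h2⟩ <;>
          (rw [h] at hvw'; unfold slotv at hvw'; omega)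
      · exfalso
        rw [hw2, hmap_r n u r hur] at hvw'
        rcases genval v hv1 hv2 with ⟨h, _⟩ | ⟨h, h1, h2⟩ <;>
          (rw [h] at hvw'; unfold slotv at hvw'; omega)
      · rcases genval v hv1 hv2 with ⟨h, h0⟩ | ⟨h, ha1, ha2⟩ <;>
          rcases genval w hw1 hw2 with ⟨h', h0'⟩ | ⟨h', hb1, hb2⟩
        · exact hτinj v w hv1 hv2 hw1 hw2 (by omega)
        · exfalso; rw [h, h'] at hvw'; unfold slotv at hvw'; omega
        · exfalso; rw [h, h'] at hvw'; unfold slotv at hvw'; omega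
        · rw [h, h'] at hvw'
          exact hτinj v w hv1 hv2 hw1 hw2 (by omega)
  · intro a b hba
    by_cases ha1 : a = u
    · exact absurd (ha1 ▸ hba) (hNoInU b)
    by_cases ha2 : a = r
    · have hb : b = u := hParU b u r (ha2 ▸ hba) hUr
      refine TB_slot hn (c+1) (i := hmFin n hn u r c τ a) (j := hmFin n hn u r c τ b) ?_ ?_
      · show hmap n u r c τ a = _
        rw [ha2, hmap_r n u r hur]
      · show hmap n u r c τ b = _
        rw [hb, hmap_u]
    by_cases hb1 : b = u
    · exact absurd (hUout a (hb1 ▸ hba)) ha2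
    by_cases hb2 : b = r
    · by_cases h0 : τ a = 0
      · refine TB_slot hn c (i := hmFin n hn u r c τ a) (j := hmFin n hn u r c τ b) ?_ ?_
        · show hmap n u r c τ a = _
          rw [hmap_F0 n u r c τ ha1 ha2 h0]
        · show hmap n u r c τ b = _
          rw [hb2, hmap_r n u r hur]
      · have h1 : (hmFin n hn u r c τ a).val = n - 3 - τ a :=
          hmap_F1 n u r c τ ha1 ha2 h0
        have h2 : (hmFin n hn u r c τ b).val = slotv n (c+1) := by
          show hmap n u r c τ b = _
          rw [hb2, hmap_r n u r hur]
        have hba' := hτb a ha1 ha2 (by omega)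
        apply TB_intro_chain
        · rw [h1, h2]; unfold slotv; omega
        · rw [h1]; omega
    · have hlt : τ b < τ a := hτext b a hb1 hb2 ha1 ha2 hba
      have hτab := hτb a ha1 ha2 (by omega)
      have h1 : (hmFin n hn u r c τ a).val = n - 3 - τ a :=
        hmap_F1 n u r c τ ha1 ha2 (by omega)
      by_cases h0 : τ b = 0
      · have h2 : (hmFin n hn u r c τ b).val = slotv n c :=
          hmap_F0 n u r c τ hb1 hb2 h0
        apply TB_intro_chain
        · rw [h1, h2]; unfold slotv; omega
        · rw [h1]; omega
      · have h2 : (hmFin n hn u r c τ b).val = n - 3 - τ b :=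
          hmap_F1 n u r c τ hb1 hb2 h0
        have hτbb := hτb b hb1 hb2 (by omega)
        apply TB_intro_chain
        · rw [h1, h2]; omega
        · rw [h1]; omega

end HM


section TreeOrient
variable {V : Type} [Fintype V] [DecidableEq V]

theorem tree_orient (G : SimpleGraph V) [DecidableRel G.Adj] (htree : G.IsTree) (u : V)
    (A : V → V → Prop)
    (hadj : ∀ a b, G.Adj a b ↔ (A a b ∨ A b a))
    (hasym : ∀ a b, A a b → ¬ A b a)
    (hNoInU : ∀ w, ¬ A w u)
    (hpar : ∀ v, v ≠ u → ∃ p, A p v)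
    (hparU : ∀ p q v, A p v → A q v → p = q) :
    ∀ a b, A a b → G.dist u b = G.dist u a + 1 := by
  classical
  have hconn := htree.isConnected
  have hAadj : ∀ a b, A a b → G.Adj a b := fun a b h => (hadj a b).mpr (Or.inl h)
  -- parent function
  have hpx : ∀ v : V, ∃ p : V, v ≠ u → A p v := by
    intro v
    by_cases h : v = u
    · exact ⟨u, fun h' => absurd h h'⟩
    · obtain ⟨p, hp⟩ := hpar v h
      exact ⟨p, fun _ => hp⟩
  choose pa hpa using hpx
  -- every edge is a parent edge
  have hedge : ∀ a b, G.Adj a b → pa b = a ∨ pa a = b := by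
    have hinj : Set.InjOn (fun v => s(pa v, v)) ↑(Finset.univ.erase u) := by
      intro v hv w hw hvw
      simp only [Finset.coe_erase, Set.mem_diff, Finset.coe_univ, Set.mem_univ,
        Set.mem_singleton_iff, true_and] at hv hw
      rcases Sym2.eq_iff.mp hvw with ⟨h1, h2⟩ | ⟨h1, h2⟩
      · exact h2
      · exfalso
        have hwv : A w v := by rw [← h1]; exact hpa v hv
        have hvw2 : A v w := by rw [h2]; exact hpa w hw
        exact hasym _ _ hwv hvw2
    have hsub : (Finset.univ.erase u).image (fun v => s(pa v, v)) ⊆ G.edgeFinset := by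
      intro e he
      obtain ⟨v, hv, rfl⟩ := Finset.mem_image.mp he
      rw [SimpleGraph.mem_edgeFinset, SimpleGraph.mem_edgeSet]
      exact hAadj _ _ (hpa v (Finset.ne_of_mem_erase hv))
    have hcard1 : ((Finset.univ.erase u).image (fun v => s(pa v, v))).card =
        Fintype.card V - 1 := by
      rw [Finset.card_image_of_injOn hinj, Finset.card_erase_of_mem (Finset.mem_univ u),
        Finset.card_univ]
    have hcard2 : G.edgeFinset.card + 1 = Fintype.card V := htree.card_edgeFinset
    have heq : (Finset.univ.erase u).image (fun v => s(pa v, v)) = G.edgeFinset :=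
      Finset.eq_of_subset_of_card_le hsub (by omega)
    intro a b hab
    have : s(a, b) ∈ G.edgeFinset := by
      rw [SimpleGraph.mem_edgeFinset, SimpleGraph.mem_edgeSet]; exact hab
    rw [← heq] at this
    obtain ⟨v, hv, hve⟩ := Finset.mem_image.mp this
    rcases Sym2.eq_iff.mp hve with ⟨h1, h2⟩ | ⟨h1, h2⟩
    · exact Or.inl (by rw [← h2]; exact h1)
    · exact Or.inr (by rw [← h2]; exact h1)
  -- distance step up
  have hdista : ∀ a b, G.Adj a b → G.dist u b ≤ G.dist u a + 1 := by
    intro a b hab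
    obtain ⟨p, hp⟩ := (hconn.preconnected u a).exists_walk_length_eq_dist
    calc G.dist u b ≤ (p.concat hab).length := SimpleGraph.dist_le _
    _ = G.dist u a + 1 := by rw [SimpleGraph.Walk.length_concat, hp]
  -- last edge of a geodesic
  have hlast : ∀ b, b ≠ u → ∃ y, G.Adj y b ∧ G.dist u y < G.dist u b := by
    intro b hb
    obtain ⟨p, hp⟩ := (hconn.preconnected u b).exists_walk_length_eq_dist
    obtain ⟨y, hy, q, hq⟩ := SimpleGraph.Walk.exists_eq_cons_of_ne hb p.reverse
    refine ⟨y, hy.symm, ?_⟩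
    have hql : q.length + 1 = G.dist u b := by
      have := congrArg SimpleGraph.Walk.length hq
      rw [SimpleGraph.Walk.length_reverse, SimpleGraph.Walk.length_cons] at this
      omega
    have : G.dist u y ≤ q.reverse.length := SimpleGraph.dist_le _
    rw [SimpleGraph.Walk.length_reverse] at this
    omega
  -- no bad arcs
  have hnobad : ∀ a b, A a b → ¬ (G.dist u b ≤ G.dist u a) := by
    by_contra hbad
    push_neg at hbad
    set S : Finset V := Finset.univ.filter
      (fun x => ∃ q, A q x ∧ G.dist u x ≤ G.dist u q) with hS
    have hSne : S.Nonempty := by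
      obtain ⟨a, b, hab, hle⟩ := hbad
      exact ⟨b, Finset.mem_filter.mpr ⟨Finset.mem_univ _, a, hab, hle⟩⟩
    obtain ⟨x₀, hx₀S, hx₀min⟩ := Finset.exists_min_image S (fun x => G.dist u x) hSne
    obtain ⟨-, q, hq, hqle⟩ := Finset.mem_filter.mp hx₀S
    have hx₀u : x₀ ≠ u := fun h => hNoInU q (h ▸ hq)
    obtain ⟨y, hyadj, hylt⟩ := hlast x₀ hx₀u
    rcases hedge y x₀ hyadj with h | h
    · -- pa x₀ = y, so q = y
      have hqy : q = y := by
        have := hpa x₀ hx₀u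
        rw [h] at this
        exact hparU q y x₀ hq this
      rw [hqy] at hqle
      omega
    · -- pa y = x₀ : A x₀ y with dist y < dist x₀, so y ∈ S with smaller dist
      by_cases hyu : y = u
      · subst hyu
        have hux : A y x₀ := by
          rcases (hadj y x₀).mp hyadj with h' | h'
          · exact h'
          · exact absurd h' (hNoInU x₀)
        have hqu : q = y := hparU q y x₀ hq hux
        rw [hqu] at hqle
        rw [(hconn.dist_eq_zero_iff).mpr rfl] at hqle
        have := hconn.pos_dist_of_ne (Ne.symm hx₀u)
        omega
      · have harc : A x₀ y := by rw [← h]; exact hpa y hyu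
        have hyS : y ∈ S := Finset.mem_filter.mpr
          ⟨Finset.mem_univ _, x₀, harc, le_of_lt hylt⟩
        have := hx₀min y hyS
        omega
  intro a b hab
  have h1 := hdista a b (hAadj a b hab)
  have h2 := hnobad a b hab
  omega

end TreeOrient


section PSI
variable {V : Type} [Fintype V] [DecidableEq V]

def UsedArc (A : V → V → Prop) (n : ℕ) (g : V → Fin n) (d : ℕ) : Prop :=
  ∃ a b, A a b ∧ (g a).val = n - 3 + d ∧ (g b).val = n - 3 + (d + 1) % 3

noncomputable def cgf (A : V → V → Prop) (n : ℕ) (g : V → Fin n) : ℕ :=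
  letI := Classical.propDecidable
  if ¬ UsedArc A n g 0 then 0 else if ¬ UsedArc A n g 1 then 1 else 2

noncomputable def tgf (A : V → V → Prop) (n : ℕ) (g : V → Fin n) (v : V) : ℕ :=
  if (g v).val < n - 3 then (g v).val - 2
  else n - 5 + (((g v).val - (n - 3)) + 3 - ((cgf A n g) + 1) % 3) % 3

lemma cgf_le2 (A : V → V → Prop) (n : ℕ) (g : V → Fin n) : cgf A n g ≤ 2 := by
  unfold cgf
  split_ifs <;> omega

lemma cgf_spec (A : V → V → Prop) (n : ℕ) (g : V → Fin n) :
    (cgf A n g = 0 ∧ ¬ UsedArc A n g 0) ∨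
    (cgf A n g = 1 ∧ UsedArc A n g 0 ∧ ¬ UsedArc A n g 1) ∨
    (cgf A n g = 2 ∧ UsedArc A n g 0 ∧ UsedArc A n g 1) := by
  unfold cgf
  letI := Classical.propDecidable
  split_ifs with h1 h2 <;> tauto

section Ctx

variable (n : ℕ) (A : V → V → Prop) (u r : V) (rk : V → ℕ)
variable (hcard : Fintype.card V = n)
variable (hNoInU : ∀ w, ¬ A w u)
variable (hUr : A u r)
variable (hUout : ∀ x, A u x → x = r)
variable (hpar : ∀ v, v ≠ u → ∃ p, A p v)
variable (hparU : ∀ p q v, A p v → A q v → p = q)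
variable (hrk : ∀ a b, A a b → rk b = rk a + 1)
variable (g : V → Fin n)
variable (ginj : Function.Injective g)
variable (gpres : ∀ a b, A a b → TB n (g a) (g b))

include hcard ginj in
lemma g_surj : Function.Surjective g := by
  have : Fintype.card V = Fintype.card (Fin n) := by rw [hcard]; simp
  exact ((Fintype.bijective_iff_injective_and_card g).mpr ⟨ginj, this⟩).2

include hcard hNoInU hpar ginj gpres in
lemma psi_gu (hn : 4 ≤ n) : g u = ⟨0, by omega⟩ := by
  obtain ⟨v, hv⟩ := g_surj (n := n) (g := g) hcard ginj (⟨0, by omega⟩ : Fin n)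
  by_cases hvu : v = u
  · rw [← hvu]; exact hv
  · exfalso
    obtain ⟨p, hp⟩ := hpar v hvu
    have := TB_chain_lt (i := g p) (j := g v) (by rw [hv]; simp; omega) (gpres p v hp)
    rw [hv] at this
    simp at this

include hcard hNoInU hUout hpar ginj gpres in
lemma psi_gr (hn : 5 ≤ n) : g r = ⟨1, by omega⟩ := by
  have hgu := psi_gu n A u hcard hNoInU hpar g ginj gpres (by omega)
  obtain ⟨v, hv⟩ := g_surj (n := n) (g := g) hcard ginj (⟨1, by omega⟩ : Fin n)
  have hvu : v ≠ u := by
    intro h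
    rw [h, hgu] at hv
    exact absurd (congrArg Fin.val hv) (by simp)
  obtain ⟨p, hp⟩ := hpar v hvu
  have hlt := TB_chain_lt (i := g p) (j := g v) (by rw [hv]; simp; omega) (gpres p v hp)
  rw [hv] at hlt
  have hp0 : (g p).val = 0 := by simpa using Nat.lt_one_iff.mp hlt
  have hpu : p = u := ginj (by apply Fin.ext; rw [hgu, hp0])
  rw [← hv, hUout v (hpu ▸ hp)]

include ginj gpres hrk in
lemma psi_notall (hn : 4 ≤ n) :
    ¬ (UsedArc A n g 0 ∧ UsedArc A n g 1 ∧ UsedArc A n g 2) := by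
  rintro ⟨⟨a0, b0, h0, ha0, hb0⟩, ⟨a1, b1, h1, ha1, hb1⟩, ⟨a2, b2, h2, ha2, hb2⟩⟩
  have e1 : b0 = a1 := ginj (Fin.ext (by omega))
  have e2 : b1 = a2 := ginj (Fin.ext (by omega))
  have e3 : b2 = a0 := ginj (Fin.ext (by omega))
  have r1 := hrk _ _ h0
  have r2 := hrk _ _ h1
  have r3 := hrk _ _ h2
  rw [e1] at r1
  rw [e2] at r2
  rw [e3] at r3
  omega

include ginj gpres hrk in
lemma psi_cg_unused (hn : 4 ≤ n) : ¬ UsedArc A n g (cgf A n g) := by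
  have hna := psi_notall n A rk hrk g ginj gpres hn
  rcases cgf_spec A n g with ⟨h, h0⟩ | ⟨h, h0, h1⟩ | ⟨h, h0, h1⟩
  · rw [h]; exact h0
  · rw [h]; exact h1
  · rw [h]; intro hu2; exact hna ⟨h0, h1, hu2⟩

lemma psi_cg_eq2 (hcg : cgf A n g = 2) : UsedArc A n g 0 ∧ UsedArc A n g 1 := by
  rcases cgf_spec A n g with ⟨h, h0⟩ | ⟨h, h0, h1⟩ | ⟨h, h0, h1⟩
  · omega
  · omega
  · exact ⟨h0, h1⟩

include hcard hNoInU hUout hpar ginj gpres in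
lemma psi_gF (hn : 5 ≤ n) : ∀ v, v ≠ u → v ≠ r → 2 ≤ (g v).val := by
  intro v hv1 hv2
  have hgu := psi_gu n A u hcard hNoInU hpar g ginj gpres (by omega)
  have hgr := psi_gr n A u r hcard hNoInU hUout hpar g ginj gpres hn
  have h0 : (g v).val ≠ 0 := by
    intro h
    exact hv1 (ginj (Fin.ext (by rw [hgu]; exact h)))
  have h1 : (g v).val ≠ 1 := by
    intro h
    exact hv2 (ginj (Fin.ext (by rw [hgr]; exact h)))
  omega

include hcard hNoInU hUout hpar ginj gpres in
lemma psi_tgb (hn : 5 ≤ n) : ∀ v, v ≠ u → v ≠ r → tgf A n g v ≤ n - 3 := by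
  intro v hv1 hv2
  unfold tgf
  have := (g v).2
  split_ifs with h
  · omega
  · have : (((g v).val - (n - 3)) + 3 - ((cgf A n g) + 1) % 3) % 3 < 3 :=
      Nat.mod_lt _ (by omega)
    omega

include hcard hNoInU hUout hpar ginj gpres in
lemma psi_tginj (hn : 5 ≤ n) : ∀ v w, v ≠ u → v ≠ r → w ≠ u → w ≠ r →
    tgf A n g v = tgf A n g w → v = w := by
  intro v w hv1 hv2 hw1 hw2 hvw
  have hFv := psi_gF n A u r hcard hNoInU hUout hpar g ginj gpres hn v hv1 hv2
  have hFw := psi_gF n A u r hcard hNoInU hUout hpar g ginj gpres hn w hw1 hw2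
  have hv' := (g v).2
  have hw' := (g w).2
  unfold tgf at hvw
  have hm3 : ∀ x : ℕ, x % 3 < 3 := fun x => Nat.mod_lt _ (by omega)
  apply ginj
  apply Fin.ext
  split_ifs at hvw with h1 h2 h2
  · omega
  · exfalso
    have := hm3 (((g w).val - (n - 3)) + 3 - ((cgf A n g) + 1) % 3)
    omega
  · exfalso
    have := hm3 (((g v).val - (n - 3)) + 3 - ((cgf A n g) + 1) % 3)
    omega
  · -- both in the 3-cycle: offsets equal → positions equal
    have hc := cgf_le2 A n g
    omega

include hcard hNoInU hUout hpar hparU hrk ginj gpres in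
lemma psi_tgext (hn : 5 ≤ n) : ∀ a b, a ≠ u → a ≠ r → b ≠ u → b ≠ r →
    A a b → tgf A n g a < tgf A n g b := by
  intro a b ha1 ha2 hb1 hb2 hab
  have hFa := psi_gF n A u r hcard hNoInU hUout hpar g ginj gpres hn a ha1 ha2
  have hFb := psi_gF n A u r hcard hNoInU hUout hpar g ginj gpres hn b hb1 hb2
  have ha' := (g a).2
  have hb' := (g b).2
  have htb := gpres a b hab
  have hm3 : ∀ x : ℕ, x % 3 < 3 := fun x => Nat.mod_lt _ (by omega)
  unfold tgf
  split_ifs with h1 h2 h2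
  · -- both chain
    have := TB_chain_lt h2 htb
    omega
  · -- a chain, b C3
    have := hm3 (((g b).val - (n - 3)) + 3 - ((cgf A n g) + 1) % 3)
    omega
  · -- a C3, b chain : impossible
    exfalso
    have := TB_chain_lt h2 htb
    omega
  · -- both C3
    have hc3 := TB_c3 (by omega) (by omega) htb
    have hda : UsedArc A n g ((g a).val - (n - 3)) := by
      refine ⟨a, b, hab, by omega, by omega⟩
    have hcu := psi_cg_unused n A rk hrk g ginj gpres (by omega)
    have hdanec : (g a).val - (n - 3) ≠ cgf A n g := by
      intro h
      rw [h] at hda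
      exact hcu hda
    have hc := cgf_le2 A n g
    omega

include hcard hNoInU hUout hpar ginj gpres in
lemma psi_tgcases (hn : 5 ≤ n) : ∀ v, v ≠ u → v ≠ r →
    ((g v).val < n - 3 ∧ tgf A n g v = (g v).val - 2) ∨
    (n - 3 ≤ (g v).val ∧
      tgf A n g v = n - 5 + (((g v).val - (n - 3)) + 3 - ((cgf A n g) + 1) % 3) % 3) := by
  intro v hv1 hv2
  unfold tgf
  split_ifs with h
  · exact Or.inl ⟨h, rfl⟩
  · exact Or.inr ⟨by omega, rfl⟩

include hcard hNoInU hUr hUout hpar hparU hrk ginj gpres in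
lemma psi_recover (hn : 5 ≤ n)
    (g' : V → Fin n) (ginj' : Function.Injective g')
    (gpres' : ∀ a b, A a b → TB n (g' a) (g' b))
    (heq : hmFin n (by omega : 4 ≤ n) u r (cgf A n g) (tgf A n g) =
      hmFin n (by omega : 4 ≤ n) u r (cgf A n g') (tgf A n g')) : g = g' := by
  have hgu := psi_gu (n := n) (A := A) (u := u) hcard hNoInU hpar g ginj gpres (by omega)
  have hgr := psi_gr (n := n) (A := A) (u := u) (r := r) hcard hNoInU hUout hpar g ginj gpres hn
  have hgu' := psi_gu (n := n) (A := A) (u := u) hcard hNoInU hpar g' ginj' gpres' (by omega)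
  have hgr' := psi_gr (n := n) (A := A) (u := u) (r := r) hcard hNoInU hUout hpar g' ginj' gpres' hn
  have hcl := cgf_le2 A n g
  have hcl' := cgf_le2 A n g'
  have hno : cgf A n g = cgf A n g' := by
    have := congrArg Fin.val (congrFun heq u)
    rw [show (hmFin n (by omega : 4 ≤ n) u r (cgf A n g) (tgf A n g) u).val = _ from
      hmap_u n u r _ _, show (hmFin n (by omega : 4 ≤ n) u r (cgf A n g') (tgf A n g') u).val
      = _ from hmap_u n u r _ _] at this
    unfold slotv at this
    omega
  funext v
  by_cases hv1 : v = u
  · rw [hv1, hgu, hgu']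
  by_cases hv2 : v = r
  · rw [hv2, hgr, hgr']
  have hFv := psi_gF (n := n) (A := A) (u := u) (r := r) hcard hNoInU hUout hpar g ginj gpres hn v hv1 hv2
  have hFv' := psi_gF (n := n) (A := A) (u := u) (r := r) hcard hNoInU hUout hpar g' ginj' gpres' hn v hv1 hv2
  have hb := psi_tgb (n := n) (A := A) (u := u) (r := r) hcard hNoInU hUout hpar g ginj gpres hn v hv1 hv2
  have hb' := psi_tgb (n := n) (A := A) (u := u) (r := r) hcard hNoInU hUout hpar g' ginj' gpres' hn v hv1 hv2
  have hval := congrArg Fin.val (congrFun heq v)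
  have hgv2 := (g v).2
  have hgv2' := (g' v).2
  have hm3 : ∀ x : ℕ, x % 3 < 3 := fun x => Nat.mod_lt _ (by omega)
  have m1 := hm3 (((g v).val - (n - 3)) + 3 - ((cgf A n g) + 1) % 3)
  have m2 := hm3 (((g' v).val - (n - 3)) + 3 - ((cgf A n g') + 1) % 3)
  have KV : ∀ h4 : (4:ℕ) ≤ n,
      (hmFin n h4 u r (cgf A n g) (tgf A n g) v).val =
        (if tgf A n g v = 0 then slotv n (cgf A n g) else n - 3 - tgf A n g v) := by
    intro h4
    by_cases hz : tgf A n g v = 0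
    · rw [if_pos hz]; exact hmap_F0 n u r _ _ hv1 hv2 hz
    · rw [if_neg hz]; exact hmap_F1 n u r _ _ hv1 hv2 hz
  have KV' : ∀ h4 : (4:ℕ) ≤ n,
      (hmFin n h4 u r (cgf A n g') (tgf A n g') v).val =
        (if tgf A n g' v = 0 then slotv n (cgf A n g') else n - 3 - tgf A n g' v) := by
    intro h4
    by_cases hz : tgf A n g' v = 0
    · rw [if_pos hz]; exact hmap_F0 n u r _ _ hv1 hv2 hz
    · rw [if_neg hz]; exact hmap_F1 n u r _ _ hv1 hv2 hz
  rw [KV _, KV' _] at hval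
  unfold slotv at hval
  apply Fin.ext
  rcases psi_tgcases (n := n) (A := A) (u := u) (r := r) hcard hNoInU hUout hpar g ginj gpres hn v hv1 hv2 with
    ⟨hc, ht⟩ | ⟨hc, ht⟩ <;>
  rcases psi_tgcases (n := n) (A := A) (u := u) (r := r) hcard hNoInU hUout hpar g' ginj' gpres' hn v hv1 hv2 with
    ⟨hc', ht'⟩ | ⟨hc', ht'⟩ <;>
  split_ifs at hval <;> omega

include hcard hNoInU hUr hUout hpar hparU hrk ginj gpres in
lemma psi_avoid (hn : 5 ≤ n) (v1 v2 : V) (τs : V → ℕ)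
    (hτsb : ∀ v, v ≠ u → v ≠ r → τs v ≤ n - 3)
    (hτs2 : ∀ a, a ≠ u → a ≠ r → τs a = n - 4 → a = v2)
    (hτs1 : ∀ b, b ≠ u → b ≠ r → τs b = n - 3 → b = v1)
    (hsink2 : ∀ w, ¬ A v2 w)
    (heq : hmFin n (by omega : 4 ≤ n) u r (cgf A n g) (tgf A n g) =
      hmFin n (by omega : 4 ≤ n) u r 2 τs) : False := by
  have hgu := psi_gu (n := n) (A := A) (u := u) hcard hNoInU hpar g ginj gpres (by omega)
  have hgr := psi_gr (n := n) (A := A) (u := u) (r := r) hcard hNoInU hUout hpar g ginj gpres hn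
  have hcl := cgf_le2 A n g
  have hcg : cgf A n g = 2 := by
    have := congrArg Fin.val (congrFun heq u)
    rw [show (hmFin n (by omega : 4 ≤ n) u r (cgf A n g) (tgf A n g) u).val = _ from
      hmap_u n u r _ _, show (hmFin n (by omega : 4 ≤ n) u r 2 τs u).val = _ from
      hmap_u n u r _ _] at this
    unfold slotv at this
    omega
  obtain ⟨-, a, b, hab, ha, hb⟩ := psi_cg_eq2 n A g hcg
  have ha1 : a ≠ u := by
    intro h
    rw [h, hgu] at ha
    simp only [] at ha
    omega
  have ha2 : a ≠ r := by
    intro h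
    rw [h, hgr] at ha
    simp only [] at ha
    omega
  have hb1 : b ≠ u := by
    intro h
    rw [h, hgu] at hb
    simp only [] at hb
    omega
  have hb2 : b ≠ r := by
    intro h
    rw [h, hgr] at hb
    simp only [] at hb
    omega
  have hta : tgf A n g a = n - 4 := by
    unfold tgf
    rw [if_neg (by omega), hcg, ha]
    omega
  have htb : tgf A n g b = n - 3 := by
    unfold tgf
    rw [if_neg (by omega), hcg, hb]
    omega
  have hva := congrArg Fin.val (congrFun heq a)
  rw [show (hmFin n (by omega : 4 ≤ n) u r (cgf A n g) (tgf A n g) a).val = _ from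
    hmap_F1 n u r _ _ ha1 ha2 (by omega)] at hva
  have hvb := congrArg Fin.val (congrFun heq b)
  rw [show (hmFin n (by omega : 4 ≤ n) u r (cgf A n g) (tgf A n g) b).val = _ from
    hmap_F1 n u r _ _ hb1 hb2 (by omega)] at hvb
  have hav2 : a = v2 := by
    apply hτs2 a ha1 ha2
    by_cases hz : τs a = 0
    · exfalso
      rw [show (hmFin n (by omega : 4 ≤ n) u r 2 τs a).val = _ from
        hmap_F0 n u r _ _ ha1 ha2 hz] at hva
      unfold slotv at hva
      omega
    · rw [show (hmFin n (by omega : 4 ≤ n) u r 2 τs a).val = _ from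
        hmap_F1 n u r _ _ ha1 ha2 hz] at hva
      have := hτsb a ha1 ha2
      omega
  have hbv1 : b = v1 := by
    apply hτs1 b hb1 hb2
    by_cases hz : τs b = 0
    · exfalso
      rw [show (hmFin n (by omega : 4 ≤ n) u r 2 τs b).val = _ from
        hmap_F0 n u r _ _ hb1 hb2 hz] at hvb
      unfold slotv at hvb
      omega
    · rw [show (hmFin n (by omega : 4 ≤ n) u r 2 τs b).val = _ from
        hmap_F1 n u r _ _ hb1 hb2 hz] at hvb
      have := hτsb b hb1 hb2
      omega
  exact hsink2 b (hav2 ▸ hab)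

include hcard hNoInU hpar ginj gpres in
lemma psi_empty4 (hn : n = 4) (hUr2 : A u r) (v1 v2 : V) (hv12 : v1 ≠ v2)
    (hr1 : A r v1) (hr2 : A r v2) : False := by
  have hgu := psi_gu (n := n) (A := A) (u := u) hcard hNoInU hpar g ginj gpres (by omega)
  have hru : r ≠ u := by
    intro h
    rw [h] at hUr2
    exact hNoInU u hUr2
  have hvr : (g r).val ≠ 0 := by
    intro h
    exact hru (ginj (Fin.ext (by rw [hgu]; exact h)))
  have hv1u : v1 ≠ u := by
    intro h
    rw [h] at hr1
    exact hNoInU r hr1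
  have hv2u : v2 ≠ u := by
    intro h
    rw [h] at hr2
    exact hNoInU r hr2
  have hvv1 : (g v1).val ≠ 0 := by
    intro h
    exact hv1u (ginj (Fin.ext (by rw [hgu]; exact h)))
  have hvv2 : (g v2).val ≠ 0 := by
    intro h
    exact hv2u (ginj (Fin.ext (by rw [hgu]; exact h)))
  have ht1 := TB_c3 (i := g r) (j := g v1) (by omega) (by omega) (gpres r v1 hr1)
  have ht2 := TB_c3 (i := g r) (j := g v2) (by omega) (by omega) (gpres r v2 hr2)
  have hne : (g v1).val ≠ (g v2).val := fun h => hv12 (ginj (Fin.ext h))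
  have h1 := (g v1).2
  have h2 := (g v2).2
  have h3 := (g r).2
  omega

end Ctx
end PSI

section Cardlt

lemma card_lt_of_inj_avoid {α β : Type*} [Finite β] (f : α → β) (hf : Function.Injective f)
    (b₀ : β) (hb : ∀ a, f a ≠ b₀) : Nat.card α < Nat.card β := by
  have h1 : Nat.card α = (Set.range f).ncard := by
    rw [← Nat.card_range_of_injective hf, Nat.card_coe_set_eq]
  have h2 : Set.range f ⊂ Set.univ := by
    rw [Set.ssubset_univ_iff]
    intro h
    obtain ⟨a, ha⟩ := h ▸ (Set.mem_univ b₀)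
    exact hb a ha
  calc Nat.card α = (Set.range f).ncard := h1
  _ < (Set.univ : Set β).ncard := Set.ncard_lt_ncard h2 Set.finite_univ
  _ = Nat.card β := Set.ncard_univ β

end Cardlt

section Main
variable {V : Type} [Fintype V] [DecidableEq V]

lemma main_lt5 (n : ℕ) (hn : 5 ≤ n) (A : V → V → Prop) (u r : V) (rk : V → ℕ)
    (hcard : Fintype.card V = n)
    (hNoInU : ∀ w, ¬ A w u)
    (hUr : A u r)
    (hUout : ∀ x, A u x → x = r)
    (hpar : ∀ v, v ≠ u → ∃ p, A p v)
    (hparU : ∀ p q v, A p v → A q v → p = q)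
    (hrk : ∀ a b, A a b → rk b = rk a + 1)
    (v1 v2 : V) (τs : V → ℕ)
    (hτsb : ∀ v, v ≠ u → v ≠ r → τs v ≤ n - 3)
    (hτsinj : ∀ v w, v ≠ u → v ≠ r → w ≠ u → w ≠ r → τs v = τs w → v = w)
    (hτsext : ∀ a b, a ≠ u → a ≠ r → b ≠ u → b ≠ r → A a b → τs a < τs b)
    (hτs2 : ∀ a, a ≠ u → a ≠ r → τs a = n - 4 → a = v2)
    (hτs1 : ∀ b, b ≠ u → b ≠ r → τs b = n - 3 → b = v1)
    (hsink2 : ∀ w, ¬ A v2 w) :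
    Nat.card (EmbSet A (TB n)) < Nat.card (EmbSet (fun a b => A b a) (TB n)) := by
  haveI : Finite (EmbSet (fun a b => A b a) (TB n)) := by unfold EmbSet; infer_instance
  have hn4 : 4 ≤ n := by omega
  have h0 := hm_emb n hn4 hcard A u r hNoInU hUr hUout hparU 2 τs
    (fun v h1 h2 _ => hτsb v h1 h2) hτsinj hτsext
  have hmg : ∀ gg : EmbSet A (TB n),
      Function.Injective (hmFin n hn4 u r (cgf A n gg.1) (tgf A n gg.1)) ∧
      (∀ a b, A b a → TB n (hmFin n hn4 u r (cgf A n gg.1) (tgf A n gg.1) a)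
        (hmFin n hn4 u r (cgf A n gg.1) (tgf A n gg.1) b)) := by
    intro gg
    exact hm_emb n hn4 hcard A u r hNoInU hUr hUout hparU (cgf A n gg.1) (tgf A n gg.1)
      (fun v h1 h2 _ => psi_tgb (n := n) (A := A) (u := u) (r := r) hcard hNoInU hUout hpar
        gg.1 gg.2.1 gg.2.2 hn v h1 h2)
      (psi_tginj (n := n) (A := A) (u := u) (r := r) hcard hNoInU hUout hpar gg.1 gg.2.1
        gg.2.2 hn)
      (psi_tgext (n := n) (A := A) (u := u) (r := r) (rk := rk) hcard hNoInU hUout hpar hparU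
        hrk gg.1 gg.2.1 gg.2.2 hn)
  let Φ : EmbSet A (TB n) → EmbSet (fun a b => A b a) (TB n) := fun gg =>
    ⟨hmFin n hn4 u r (cgf A n gg.1) (tgf A n gg.1), (hmg gg).1, fun a b hab => (hmg gg).2 a b hab⟩
  apply card_lt_of_inj_avoid Φ ?_ (⟨hmFin n hn4 u r 2 τs, h0.1, fun a b hab => h0.2 a b hab⟩ :
    EmbSet (fun a b => A b a) (TB n)) ?_
  · intro gg gg' h
    apply Subtype.ext
    exact psi_recover (n := n) (A := A) (u := u) (r := r) (rk := rk) hcard hNoInU hUr hUout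
      hpar hparU hrk gg.1 gg.2.1 gg.2.2 hn gg'.1 gg'.2.1 gg'.2.2 (congrArg Subtype.val h)
  · intro gg h
    exact psi_avoid (n := n) (A := A) (u := u) (r := r) (rk := rk) hcard hNoInU hUr hUout
      hpar hparU hrk gg.1 gg.2.1 gg.2.2 hn v1 v2 τs hτsb hτs2 hτs1 hsink2
      (congrArg Subtype.val h)

lemma main_lt4 (n : ℕ) (hn : n = 4) (A : V → V → Prop) (u r : V)
    (hcard : Fintype.card V = n)
    (hNoInU : ∀ w, ¬ A w u)
    (hUr : A u r)
    (hUout : ∀ x, A u x → x = r)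
    (hpar : ∀ v, v ≠ u → ∃ p, A p v)
    (hparU : ∀ p q v, A p v → A q v → p = q)
    (v1 v2 : V) (hv12 : v1 ≠ v2) (hr1 : A r v1) (hr2 : A r v2)
    (τs : V → ℕ)
    (hτsb : ∀ v, v ≠ u → v ≠ r → τs v ≤ n - 3)
    (hτsinj : ∀ v w, v ≠ u → v ≠ r → w ≠ u → w ≠ r → τs v = τs w → v = w)
    (hτsext : ∀ a b, a ≠ u → a ≠ r → b ≠ u → b ≠ r → A a b → τs a < τs b) :
    Nat.card (EmbSet A (TB n)) < Nat.card (EmbSet (fun a b => A b a) (TB n)) := by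
  haveI : Finite (EmbSet (fun a b => A b a) (TB n)) := by unfold EmbSet; infer_instance
  have hn4 : 4 ≤ n := by omega
  have h0 := hm_emb n hn4 hcard A u r hNoInU hUr hUout hparU 2 τs
    (fun v h1 h2 _ => hτsb v h1 h2) hτsinj hτsext
  haveI : IsEmpty (EmbSet A (TB n)) := by
    constructor
    intro gg
    exact psi_empty4 (n := n) (A := A) (u := u) (r := r) hcard hNoInU hpar gg.1 gg.2.1 gg.2.2
      hn hUr v1 v2 hv12 hr1 hr2
  haveI : Nonempty (EmbSet (fun a b => A b a) (TB n)) :=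
    ⟨⟨hmFin n hn4 u r 2 τs, h0.1, fun a b hab => h0.2 a b hab⟩⟩
  rw [Nat.card_of_isEmpty]
  exact Nat.card_pos

end Main


/-- Orienting a tree of maximum degree at least 3 away from a leaf `u` gives a
non converse invariant orgraph: there is a unique source `u`, of out-degree 1,
at least two sinks, and the source sum is smaller than the sink sum. -/
theorem stmt_9 {V : Type} [Fintype V] [DecidableEq V]
    (G : SimpleGraph V) [DecidableRel G.Adj]
    (htree : G.IsTree) (hΔ : 3 ≤ G.maxDegree)
    (u : V) (hleaf : G.degree u = 1)
    (A : V → V → Prop) (hor : IsOrientation G A)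
    (hu : inDeg A u = 0) (haway : ∀ v : V, v ≠ u → inDeg A v = 1) :
    Finset.univ.filter (fun v => inDeg A v = 0) = {u} ∧
    outDeg A u = 1 ∧
    2 ≤ (Finset.univ.filter (fun v => outDeg A v = 0)).card ∧
    (∑ v ∈ Finset.univ.filter (fun v => inDeg A v = 0), 2 ^ outDeg A v <
      ∑ v ∈ Finset.univ.filter (fun v => outDeg A v = 0), 2 ^ inDeg A v) ∧
    ¬ ConverseInvariant A := by
  classical
  set n := Fintype.card V with hn
  have hasym : ∀ a b, A a b → ¬ A b a := hor.1
  have hadj : ∀ a b, G.Adj a b ↔ (A a b ∨ A b a) := hor.2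
  have hAadj : ∀ a b, A a b → G.Adj a b := fun a b h => (hadj a b).mpr (Or.inl h)
  have hAirr : ∀ a, ¬ A a a := fun a h => G.irrefl (hAadj a a h)
  have hin : ∀ v, inDeg A v = (Finset.univ.filter (fun w => A w v)).card := by
    intro v
    rw [inDeg, Nat.card_eq_fintype_card, Fintype.card_subtype]
  have hout : ∀ v, outDeg A v = (Finset.univ.filter (fun w => A v w)).card := by
    intro v
    rw [outDeg, Nat.card_eq_fintype_card, Fintype.card_subtype]
  have hNoInU : ∀ w', ¬ A w' u := by
    intro w' hw'
    have h0 : (Finset.univ.filter (fun w => A w u)).card = 0 := by rw [← hin]; exact hu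
    rw [Finset.card_eq_zero] at h0
    have : w' ∈ Finset.univ.filter (fun w => A w u) :=
      Finset.mem_filter.mpr ⟨Finset.mem_univ _, hw'⟩
    rw [h0] at this
    exact absurd this (Finset.notMem_empty _)
  have hparBoth : ∀ v, v ≠ u → ∃ p, A p v ∧ ∀ q, A q v → q = p := by
    intro v hv
    have h1 : (Finset.univ.filter (fun w => A w v)).card = 1 := by rw [← hin]; exact haway v hv
    obtain ⟨p, hp⟩ := Finset.card_eq_one.mp h1
    refine ⟨p, ?_, ?_⟩
    · have : p ∈ Finset.univ.filter (fun w => A w v) := by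
        rw [hp]; exact Finset.mem_singleton_self p
      exact (Finset.mem_filter.mp this).2
    · intro q hq
      have : q ∈ ({p} : Finset V) := by
        rw [← hp]; exact Finset.mem_filter.mpr ⟨Finset.mem_univ _, hq⟩
      exact Finset.mem_singleton.mp this
  have hpar : ∀ v, v ≠ u → ∃ p, A p v := fun v hv =>
    ⟨(hparBoth v hv).choose, (hparBoth v hv).choose_spec.1⟩
  have hparU : ∀ p q v, A p v → A q v → p = q := by
    intro p q v hp hq
    have hv : v ≠ u := by
      intro h
      rw [h] at hp
      exact hNoInU p hp
    obtain ⟨p0, _, huniq⟩ := hparBoth v hv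
    rw [huniq p hp, huniq q hq]
  -- degree splitting
  have hdeg : ∀ v, G.degree v = outDeg A v + inDeg A v := by
    intro v
    have hsplit : G.neighborFinset v =
        (Finset.univ.filter (fun w => A v w)) ∪ (Finset.univ.filter (fun w => A w v)) := by
      ext w
      simp only [SimpleGraph.mem_neighborFinset, Finset.mem_union, Finset.mem_filter,
        Finset.mem_univ, true_and]
      exact hadj v w
    have hdisj : Disjoint (Finset.univ.filter (fun w => A v w))
        (Finset.univ.filter (fun w => A w v)) := by
      rw [Finset.disjoint_left]
      intro w h1 h2
      exact hasym v w (Finset.mem_filter.mp h1).2 (Finset.mem_filter.mp h2).2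
    rw [← SimpleGraph.card_neighborFinset_eq_degree, hsplit,
      Finset.card_union_of_disjoint hdisj, hout, hin]
  -- part 2
  have part2 : outDeg A u = 1 := by
    have := hdeg u
    omega
  -- part 1
  have part1 : Finset.univ.filter (fun v => inDeg A v = 0) = {u} := by
    ext v
    simp only [Finset.mem_filter, Finset.mem_univ, true_and, Finset.mem_singleton]
    constructor
    · intro h
      by_contra hne
      rw [haway v hne] at h
      omega
    · intro h
      rw [h]
      exact hu
  -- the vertex r
  have hUcard : (Finset.univ.filter (fun x => A u x)).card = 1 := by rw [← hout]; exact part2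
  obtain ⟨r, hr⟩ := Finset.card_eq_one.mp hUcard
  have hUr : A u r := by
    have : r ∈ Finset.univ.filter (fun x => A u x) := by
      rw [hr]; exact Finset.mem_singleton_self r
    exact (Finset.mem_filter.mp this).2
  have hUout : ∀ x, A u x → x = r := by
    intro x hx
    have : x ∈ ({r} : Finset V) := by
      rw [← hr]; exact Finset.mem_filter.mpr ⟨Finset.mem_univ _, hx⟩
    exact Finset.mem_singleton.mp this
  have hur : u ≠ r := by
    intro h
    rw [← h] at hUr
    exact hAirr u hUr
  -- max degree vertex
  haveI : Nonempty V := ⟨u⟩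
  obtain ⟨w, hw⟩ := G.exists_maximal_degree_vertex
  have hw3 : 3 ≤ G.degree w := by rw [← hw]; exact hΔ
  have hwu : w ≠ u := by
    intro h
    rw [h, hleaf] at hw3
    omega
  have hwout : 2 ≤ outDeg A w := by
    have h1 := hdeg w
    have h2 := haway w hwu
    omega
  have hn4 : 4 ≤ n := by
    have := G.degree_lt_card_verts w
    rw [← hn] at this
    omega
  -- double counting
  have hsum : ∑ v : V, (Finset.univ.filter (fun w' => A v w')).card =
      ∑ v : V, (Finset.univ.filter (fun w' => A w' v)).card := by
    simp_rw [Finset.card_filter]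
    exact Finset.sum_comm
  have hsumin : ∑ v : V, (Finset.univ.filter (fun w' => A w' v)).card = n - 1 := by
    rw [← Finset.add_sum_erase _ _ (Finset.mem_univ u)]
    have h0 : (Finset.univ.filter (fun w' => A w' u)).card = 0 := by rw [← hin]; exact hu
    have h1 : ∀ v ∈ Finset.univ.erase u, (Finset.univ.filter (fun w' => A w' v)).card = 1 :=
      fun v hv => by rw [← hin]; exact haway v (Finset.ne_of_mem_erase hv)
    rw [h0, Finset.sum_congr rfl h1, Finset.sum_const, smul_eq_mul, mul_one,
      Finset.card_erase_of_mem (Finset.mem_univ u), Finset.card_univ]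
    omega
  have hsumout : ∑ v : V, (Finset.univ.filter (fun w' => A v w')).card = n - 1 := by
    rw [hsum, hsumin]
  -- part 3
  have part3 : 2 ≤ (Finset.univ.filter (fun v => outDeg A v = 0)).card := by
    have hcards : (Finset.univ.filter (fun v => outDeg A v = 0)).card +
        (Finset.univ.filter (fun v => ¬ outDeg A v = 0)).card = n := by
      rw [Finset.card_filter_add_card_filter_not, Finset.card_univ]
    set NS := Finset.univ.filter (fun v => ¬ outDeg A v = 0) with hNS
    have hwNS : w ∈ NS := by
      rw [hNS]
      refine Finset.mem_filter.mpr ⟨Finset.mem_univ _, by omega⟩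
    have hup : NS.card + 1 ≤ ∑ v ∈ NS, (Finset.univ.filter (fun w' => A v w')).card := by
      rw [← Finset.add_sum_erase _ _ hwNS]
      have hlow : (NS.erase w).card ≤
          ∑ v ∈ NS.erase w, (Finset.univ.filter (fun w' => A v w')).card := by
        calc (NS.erase w).card = (NS.erase w).card • 1 := by simp
        _ ≤ _ := Finset.card_nsmul_le_sum _ _ 1 (by
            intro x hx
            have hx' := (Finset.mem_filter.mp (Finset.mem_of_mem_erase hx)).2
            rw [hout] at hx'
            omega)
      have h2 : 2 ≤ (Finset.univ.filter (fun w' => A w w')).card := by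
        rw [← hout]; exact hwout
      have h3 : (NS.erase w).card = NS.card - 1 := Finset.card_erase_of_mem hwNS
      have h4 : 1 ≤ NS.card := Finset.card_pos.mpr ⟨w, hwNS⟩
      omega
    have hle : ∑ v ∈ NS, (Finset.univ.filter (fun w' => A v w')).card ≤ n - 1 := by
      rw [← hsumout]
      exact Finset.sum_le_sum_of_subset (Finset.filter_subset _ _)
    omega
  -- part 4
  have part4 : (∑ v ∈ Finset.univ.filter (fun v => inDeg A v = 0), 2 ^ outDeg A v <
      ∑ v ∈ Finset.univ.filter (fun v => outDeg A v = 0), 2 ^ inDeg A v) := by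
    rw [part1, Finset.sum_singleton, part2]
    have hconst : ∀ v ∈ Finset.univ.filter (fun v => outDeg A v = 0),
        2 ^ inDeg A v = 2 := by
      intro v hv
      have hv0 := (Finset.mem_filter.mp hv).2
      have hvu : v ≠ u := by
        intro h
        rw [h, part2] at hv0
        omega
      rw [haway v hvu, pow_one]
    rw [Finset.sum_congr rfl hconst, Finset.sum_const, smul_eq_mul]
    have := part3
    omega
  refine ⟨part1, part2, part3, part4, ?_⟩
  -- ===== part 5 =====
  have hconn := htree.isConnected
  have hrkA : ∀ a b, A a b → G.dist u b = G.dist u a + 1 :=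
    tree_orient G htree u A hadj hasym hNoInU hpar hparU
  -- r is not a sink
  have hdist1 : ∀ x, G.dist u x = 1 → x = r := by
    intro x hx
    have hxu : x ≠ u := by
      intro h
      rw [h, SimpleGraph.dist_self] at hx
      omega
    obtain ⟨p, hp⟩ := hpar x hxu
    have hd := hrkA p x hp
    have hp0 : G.dist u p = 0 := by omega
    have hpu : u = p := hconn.dist_eq_zero_iff.mp hp0
    rw [← hpu] at hp
    exact hUout x hp
  have hlevel2 : ∀ m x, G.dist u x = m → 2 ≤ m → ∃ y, G.dist u y = 2 := by
    intro m
    induction m using Nat.strong_induction_on with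
    | _ m ih =>
      intro x hx h2
      by_cases hm : m = 2
      · exact ⟨x, by omega⟩
      · have hxu : x ≠ u := by
          intro h
          rw [h, SimpleGraph.dist_self] at hx
          omega
        obtain ⟨p, hp⟩ := hpar x hxu
        have hd := hrkA p x hp
        exact ih (m - 1) (by omega) p (by omega) (by omega)
  have hrout : outDeg A r ≠ 0 := by
    have hgoal : ∀ y, A r y → outDeg A r ≠ 0 := by
      intro y hy h0
      rw [hout, Finset.card_eq_zero] at h0
      have : y ∈ Finset.univ.filter (fun w' => A r w') :=
        Finset.mem_filter.mpr ⟨Finset.mem_univ _, hy⟩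
      rw [h0] at this
      exact absurd this (Finset.notMem_empty _)
    by_cases hwr : w = r
    · rw [← hwr]
      omega
    · have hdw : 2 ≤ G.dist u w := by
        rcases Nat.lt_or_ge (G.dist u w) 2 with h | h
        · exfalso
          interval_cases hdd : (G.dist u w)
          · exact hwu (hconn.dist_eq_zero_iff.mp hdd).symm
          · exact hwr (hdist1 w hdd)
        · exact h
      obtain ⟨y, hy2⟩ := hlevel2 (G.dist u w) w rfl hdw
      have hyu : y ≠ u := by
        intro h
        rw [h, SimpleGraph.dist_self] at hy2
        omega
      obtain ⟨p, hp⟩ := hpar y hyu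
      have hd := hrkA p y hp
      have hpr : p = r := hdist1 p (by omega)
      rw [hpr] at hp
      exact hgoal y hp
  -- two sinks
  obtain ⟨v1, hv1m, v2, hv2m, hv12⟩ := Finset.one_lt_card.mp (by omega : 1 <
    (Finset.univ.filter (fun v => outDeg A v = 0)).card)
  have hsinkgen : ∀ v, v ∈ Finset.univ.filter (fun v => outDeg A v = 0) →
      ∀ w', ¬ A v w' := by
    intro v hv w' hw'
    have h0 := (Finset.mem_filter.mp hv).2
    rw [hout, Finset.card_eq_zero] at h0
    have : w' ∈ Finset.univ.filter (fun x => A v x) :=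
      Finset.mem_filter.mpr ⟨Finset.mem_univ _, hw'⟩
    rw [h0] at this
    exact absurd this (Finset.notMem_empty _)
  have hsink1 : ∀ w', ¬ A v1 w' := hsinkgen v1 hv1m
  have hsink2 : ∀ w', ¬ A v2 w' := hsinkgen v2 hv2m
  have hv1u : v1 ≠ u := by
    intro h
    exact hsink1 r (h ▸ hUr)
  have hv2u : v2 ≠ u := by
    intro h
    exact hsink2 r (h ▸ hUr)
  have hv1r : v1 ≠ r := by
    intro h
    have := (Finset.mem_filter.mp hv1m).2
    rw [h] at this
    exact hrout this
  have hv2r : v2 ≠ r := by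
    intro h
    have := (Finset.mem_filter.mp hv2m).2
    rw [h] at this
    exact hrout this
  -- key function and ranks
  set ν : V ≃ Fin (Fintype.card V) := Fintype.equivFin V with hν
  set key : V → ℕ := fun v => G.dist u v * n + (ν v).val with hkey
  have hνlt : ∀ v, (ν v).val < n := fun v => by rw [hn]; exact (ν v).2
  have hkeymono : ∀ a b, A a b → key a < key b := by
    intro a b hab
    have hd := hrkA a b hab
    simp only [hkey]
    rw [hd, Nat.add_mul, one_mul]
    have h1 := hνlt a
    omega
  have hkeylt : ∀ a b, G.dist u a < G.dist u b → key a < key b := by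
    intro a b hab
    simp only [hkey]
    have h1 : (G.dist u a + 1) * n ≤ G.dist u b * n :=
      Nat.mul_le_mul_right n (by omega)
    rw [Nat.add_mul, one_mul] at h1
    have h2 := hνlt a
    omega
  have hkeyinj : Function.Injective key := by
    intro a b hab
    rcases Nat.lt_trichotomy (G.dist u a) (G.dist u b) with h | h | h
    · exact absurd hab (Nat.ne_of_lt (hkeylt a b h))
    · apply ν.injective
      apply Fin.ext
      simp only [hkey] at hab
      rw [h] at hab
      omega
    · exact absurd hab.symm (Nat.ne_of_lt (hkeylt b a h))
  set s : Finset V := Finset.univ \ {u, r, v1, v2} with hs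
  have hmemS : ∀ x, x ∈ s ↔ (x ≠ u ∧ x ≠ r ∧ x ≠ v1 ∧ x ≠ v2) := by
    intro x
    simp only [hs, Finset.mem_sdiff, Finset.mem_univ, true_and, Finset.mem_insert,
      Finset.mem_singleton]
    tauto
  have hscard : s.card = n - 4 := by
    rw [hs, Finset.card_sdiff_of_subset (Finset.subset_univ _), Finset.card_univ, ← hn]
    have h4 : ({u, r, v1, v2} : Finset V).card = 4 := by
      rw [Finset.card_insert_of_notMem (by simp [hur, hv1u.symm, hv2u.symm]),
        Finset.card_insert_of_notMem (by simp [hv1r.symm, hv2r.symm]),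
        Finset.card_insert_of_notMem (by simp [hv12]), Finset.card_singleton]
    rw [h4]
  set rnk : V → ℕ := fun v => (s.filter (fun w' => key w' < key v)).card with hrnk
  have hsmem : ∀ v, v ≠ u → v ≠ r → v ≠ v1 → v ≠ v2 → v ∈ s :=
    fun v h1 h2 h3 h4 => (hmemS v).mpr ⟨h1, h2, h3, h4⟩
  have hsn5 : ∀ v, v ∈ s → 5 ≤ n := by
    intro v hv
    have : 1 ≤ s.card := Finset.card_pos.mpr ⟨v, hv⟩
    omega
  have hrnkb : ∀ v ∈ s, rnk v ≤ n - 5 := by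
    intro v hv
    have hsub : s.filter (fun w' => key w' < key v) ⊆ s.erase v := by
      intro x hx
      obtain ⟨hx1, hx2⟩ := Finset.mem_filter.mp hx
      refine Finset.mem_erase.mpr ⟨?_, hx1⟩
      intro h
      rw [h] at hx2
      omega
    have h1 := Finset.card_le_card hsub
    rw [Finset.card_erase_of_mem hv, hscard] at h1
    simp only [hrnk]
    omega
  have hrnkmono : ∀ a b, a ∈ s → b ∈ s → key a < key b → rnk a < rnk b := by
    intro a b ha hb hab
    simp only [hrnk]
    apply Finset.card_lt_card
    constructor
    · intro x hx
      obtain ⟨hx1, hx2⟩ := Finset.mem_filter.mp hx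
      exact Finset.mem_filter.mpr ⟨hx1, by omega⟩
    · intro hcon
      have : a ∈ s.filter (fun w' => key w' < key b) :=
        Finset.mem_filter.mpr ⟨ha, hab⟩
      have := Finset.mem_filter.mp (hcon this)
      omega
  set τs : V → ℕ := fun v => if v = v1 then n - 3 else if v = v2 then n - 4 else rnk v
    with hτs
  have hτval : ∀ v, v ≠ u → v ≠ r →
      (v = v1 ∧ τs v = n - 3) ∨ (v = v2 ∧ τs v = n - 4) ∨ (v ∈ s ∧ τs v = rnk v) := by
    intro v h1 h2
    by_cases e1 : v = v1
    · exact Or.inl ⟨e1, by simp only [hτs]; rw [if_pos e1]⟩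
    by_cases e2 : v = v2
    · exact Or.inr (Or.inl ⟨e2, by simp only [hτs]; rw [if_neg e1, if_pos e2]⟩)
    · exact Or.inr (Or.inr ⟨hsmem v h1 h2 e1 e2, by simp only [hτs]; rw [if_neg e1, if_neg e2]⟩)
  have hτsb : ∀ v, v ≠ u → v ≠ r → τs v ≤ n - 3 := by
    intro v h1 h2
    rcases hτval v h1 h2 with ⟨-, hv⟩ | ⟨-, hv⟩ | ⟨hvs, hv⟩
    · omega
    · omega
    · have := hrnkb v hvs
      omega
  have hτsinj : ∀ v w', v ≠ u → v ≠ r → w' ≠ u → w' ≠ r → τs v = τs w' → v = w' := by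
    intro v w' hva hvb hwa hwb heq
    rcases hτval v hva hvb with ⟨ev, hv⟩ | ⟨ev, hv⟩ | ⟨evs, hv⟩ <;>
      rcases hτval w' hwa hwb with ⟨ew, hw'⟩ | ⟨ew, hw'⟩ | ⟨ews, hw'⟩
    · rw [ev, ew]
    · exfalso; omega
    · exfalso
      have := hrnkb w' ews
      have := hsn5 w' ews
      omega
    · exfalso; omega
    · rw [ev, ew]
    · exfalso
      have := hrnkb w' ews
      have := hsn5 w' ews
      omega
    · exfalso
      have := hrnkb v evs
      have := hsn5 v evs
      omega
    · exfalso
      have := hrnkb v evs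
      have := hsn5 v evs
      omega
    · by_contra hne
      rcases Nat.lt_trichotomy (key v) (key w') with h | h | h
      · have := hrnkmono v w' evs ews h
        omega
      · exact hne (hkeyinj h)
      · have := hrnkmono w' v ews evs h
        omega
  have hτsext : ∀ a b, a ≠ u → a ≠ r → b ≠ u → b ≠ r → A a b → τs a < τs b := by
    intro a b ha1 ha2 hb1 hb2 hab
    rcases hτval a ha1 ha2 with ⟨ea, hva⟩ | ⟨ea, hva⟩ | ⟨eas, hva⟩
    · exfalso; rw [ea] at hab; exact hsink1 _ hab
    · exfalso; rw [ea] at hab; exact hsink2 _ hab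
    · rcases hτval b hb1 hb2 with ⟨eb, hvb⟩ | ⟨eb, hvb⟩ | ⟨ebs, hvb⟩
      · have := hrnkb a eas
        have := hsn5 a eas
        omega
      · have := hrnkb a eas
        have := hsn5 a eas
        omega
      · have := hrnkmono a b eas ebs (hkeymono a b hab)
        omega
  -- the count inequality
  have hlt : Nat.card (EmbSet A (TB n)) <
      Nat.card (EmbSet (fun a b => A b a) (TB n)) := by
    rcases Nat.lt_or_ge n 5 with h5 | h5
    · -- n = 4
      have hn4e : n = 4 := by omega
      -- the max-degree vertex is r
      have hdegwle : G.degree w ≤ 3 := by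
        have := G.degree_lt_card_verts w
        rw [← hn, hn4e] at this
        omega
      have hdegw : G.degree w = 3 := by omega
      have hnbrw : G.neighborFinset w = Finset.univ.erase w := by
        apply Finset.eq_of_subset_of_card_le
        · intro x hx
          have := (SimpleGraph.mem_neighborFinset _ _ _).mp hx
          exact Finset.mem_erase.mpr ⟨(G.ne_of_adj this).symm, Finset.mem_univ _⟩
        · rw [Finset.card_erase_of_mem (Finset.mem_univ w), Finset.card_univ, ← hn, hn4e,
            SimpleGraph.card_neighborFinset_eq_degree, hdegw]
      have hnbru : G.neighborFinset u = {r} := by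
        symm
        apply Finset.eq_of_subset_of_card_le
        · intro x hx
          rw [Finset.mem_singleton] at hx
          rw [hx]
          exact (SimpleGraph.mem_neighborFinset _ _ _).mpr (hAadj u r hUr)
        · rw [Finset.card_singleton, SimpleGraph.card_neighborFinset_eq_degree, hleaf]
      have hwr : w = r := by
        have : u ∈ G.neighborFinset w := by
          rw [hnbrw]
          exact Finset.mem_erase.mpr ⟨hwu.symm, Finset.mem_univ _⟩
        have hadjwu := (SimpleGraph.mem_neighborFinset _ _ _).mp this
        have : w ∈ G.neighborFinset u := (SimpleGraph.mem_neighborFinset _ _ _).mpr hadjwu.symm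
        rw [hnbru] at this
        exact Finset.mem_singleton.mp this
      have hArv : ∀ x, x ≠ u → x ≠ r → A r x := by
        intro x hxu hxr
        have : x ∈ G.neighborFinset r := by
          rw [← hwr, hnbrw]
          exact Finset.mem_erase.mpr ⟨by rw [hwr]; exact hxr, Finset.mem_univ _⟩
        have hadjrx := (SimpleGraph.mem_neighborFinset _ _ _).mp this
        rcases (hadj r x).mp hadjrx with h | h
        · exact h
        · exact absurd (hparU x u r h hUr) hxu
      exact main_lt4 n hn4e A u r hn.symm hNoInU hUr hUout hpar hparU v1 v2 hv12
        (hArv v1 hv1u hv1r) (hArv v2 hv2u hv2r) τs hτsb hτsinj hτsext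
    · -- n ≥ 5
      have hτs2 : ∀ a, a ≠ u → a ≠ r → τs a = n - 4 → a = v2 := by
        intro a h1 h2 he
        rcases hτval a h1 h2 with ⟨ea, hva⟩ | ⟨ea, hva⟩ | ⟨eas, hva⟩
        · exfalso; omega
        · exact ea
        · exfalso
          have := hrnkb a eas
          omega
      have hτs1 : ∀ b, b ≠ u → b ≠ r → τs b = n - 3 → b = v1 := by
        intro b h1 h2 he
        rcases hτval b h1 h2 with ⟨eb, hvb⟩ | ⟨eb, hvb⟩ | ⟨ebs, hvb⟩
        · exact eb
        · exfalso; omega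
        · exfalso
          have := hrnkb b ebs
          omega
      exact main_lt5 n h5 A u r (G.dist u) hn.symm hNoInU hUr hUout hpar hparU hrkA
        v1 v2 τs hτsb hτsinj hτsext hτs2 hτs1 hsink2
  -- conclude
  intro hCI
  have heq := hCI (Fin n) inferInstance (TB n) (TB_tournament hn4)
  have h1 := card_embSet_eq A (TB n)
  have h2 := card_embSet_eq (fun a b => A b a) (TB n)
  have haut : Nat.card (AutSet A) = Nat.card (AutSet (fun a b => A b a)) :=
    Nat.card_congr (autFlip A)
  rw [h1, h2, heq, ← haut] at hlt
  exact lt_irrefl _ hlt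
end

section
/- Let G be a finite graph with odd maximum degree Δ(G) ≥ 3 such that the number of vertices of G attaining the maximum degree is odd. Then for every orientation D of G there exists a tournament T with f_T(D) ≠ f_T(−D). -/
open Finset Polynomial

set_option linter.unusedSectionVars false
set_option maxHeartbeats 1000000

private def relOf {V W : Type} (P : V → V → Prop) (e : V ↪ W) : W → W → Prop :=
  fun x y => ∃ a b, P a b ∧ e a = x ∧ e b = y

private lemma relOf_iff {V W : Type} (P : V → V → Prop) (e : V ↪ W) (a b : V) :
    relOf P e (e a) (e b) ↔ P a b := by
  constructor
  · rintro ⟨a', b', h, ha, hb⟩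
    rwa [e.injective ha, e.injective hb] at h
  · exact fun h => ⟨a, b, h, rfl, rfl⟩

private def toCopy {V W : Type} (P : V → V → Prop) (B : W → W → Prop)
    (e : {e : V ↪ W // ∀ a b, P a b → B (e a) (e b)}) :
    {p : Set W × (W → W → Prop) //
      (∀ a b, p.2 a b → B a b ∧ a ∈ p.1 ∧ b ∈ p.1) ∧
      ∃ eq : V ≃ p.1, ∀ a b, P a b ↔ p.2 (eq a : W) (eq b : W)} :=
  ⟨(Set.range e.1, relOf P e.1), by
    constructor
    · rintro x y ⟨a, b, hab, rfl, rfl⟩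
      exact ⟨e.2 a b hab, ⟨a, rfl⟩, ⟨b, rfl⟩⟩
    · refine ⟨Equiv.ofInjective e.1 e.1.injective, fun a b => ?_⟩
      simpa using (relOf_iff P e.1 a b).symm⟩

private lemma toCopy_surj {V W : Type} (P : V → V → Prop) (B : W → W → Prop) :
    Function.Surjective (toCopy P B) := by
  rintro ⟨⟨S, R⟩, hsub, ⟨eq, heq⟩⟩
  have hinj : Function.Injective (fun a => (eq a : W)) := by
    intro a b h
    exact eq.injective (Subtype.ext h)
  refine ⟨⟨⟨fun a => (eq a : W), hinj⟩, ?_⟩, ?_⟩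
  · intro a b hab
    exact (hsub _ _ ((heq a b).1 hab)).1
  · apply Subtype.ext
    have h1 : Set.range (fun a => (eq a : W)) = S := by
      ext x
      constructor
      · rintro ⟨a, rfl⟩; exact (eq a).2
      · intro hx
        exact ⟨eq.symm ⟨x, hx⟩, by simp⟩
    have h2 : relOf P ⟨fun a => (eq a : W), hinj⟩ = R := by
      funext x y
      apply propext
      constructor
      · rintro ⟨a, b, hab, rfl, rfl⟩
        exact (heq a b).1 hab
      · intro hxy
        obtain ⟨_, hx, hy⟩ := hsub x y hxy
        refine ⟨eq.symm ⟨x, hx⟩, eq.symm ⟨y, hy⟩, ?_, by simp, by simp⟩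
        apply (heq _ _).2
        simpa using hxy
    simp only [toCopy]
    exact Prod.ext h1 h2

private lemma toCopy_comp {V W : Type} (P : V → V → Prop) (B : W → W → Prop)
    (e : {e : V ↪ W // ∀ a b, P a b → B (e a) (e b)})
    (g : {g : V ≃ V // ∀ a b, P a b ↔ P (g a) (g b)}) :
    toCopy P B ⟨g.1.toEmbedding.trans e.1, fun a b hab => e.2 _ _ ((g.2 a b).1 hab)⟩
      = toCopy P B e := by
  apply Subtype.ext
  simp only [toCopy]
  refine Prod.ext ?_ ?_
  · ext x
    simp only [Set.mem_range, Function.Embedding.trans_apply, Equiv.coe_toEmbedding]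
    constructor
    · rintro ⟨a, rfl⟩; exact ⟨g.1 a, rfl⟩
    · rintro ⟨a, rfl⟩; exact ⟨g.1.symm a, by simp⟩
  · funext x y
    apply propext
    constructor
    · rintro ⟨a, b, hab, rfl, rfl⟩
      exact ⟨g.1 a, g.1 b, (g.2 a b).1 hab, rfl, rfl⟩
    · rintro ⟨a, b, hab, rfl, rfl⟩
      refine ⟨g.1.symm a, g.1.symm b, ?_, by simp, by simp⟩
      have := (g.2 (g.1.symm a) (g.1.symm b)).2
      simp at this
      exact this hab

private lemma emb_card_eq {V W : Type} [Fintype V] [Fintype W]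
    (P : V → V → Prop) (B : W → W → Prop) :
    Nat.card {e : V ↪ W // ∀ a b, P a b → B (e a) (e b)} =
      copyCount P B * Nat.card {g : V ≃ V // ∀ a b, P a b ↔ P (g a) (g b)} := by
  classical
  set Cop := {p : Set W × (W → W → Prop) //
      (∀ a b, p.2 a b → B a b ∧ a ∈ p.1 ∧ b ∈ p.1) ∧
      ∃ eq : V ≃ p.1, ∀ a b, P a b ↔ p.2 (eq a : W) (eq b : W)} with hCop
  set Embs := {e : V ↪ W // ∀ a b, P a b → B (e a) (e b)} with hEmbs
  set AutP := {g : V ≃ V // ∀ a b, P a b ↔ P (g a) (g b)} with hAut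
  have hsurj : Function.Surjective (toCopy P B) := toCopy_surj P B
  let s : Cop → Embs := Function.surjInv hsurj
  have hs : ∀ c, toCopy P B (s c) = c := Function.surjInv_eq hsurj
  let Ψ : Cop × AutP → Embs := fun cg =>
    ⟨cg.2.1.toEmbedding.trans (s cg.1).1,
      fun a b hab => (s cg.1).2 _ _ ((cg.2.2 a b).1 hab)⟩
  have hΨcopy : ∀ cg : Cop × AutP, toCopy P B (Ψ cg) = cg.1 := by
    intro cg
    exact (toCopy_comp P B (s cg.1) cg.2).trans (hs cg.1)
  have hΨinj : Function.Injective Ψ := by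
    rintro ⟨c, g⟩ ⟨c', g'⟩ h
    have h1 : toCopy P B (Ψ (c, g)) = c := hΨcopy (c, g)
    have h2 : toCopy P B (Ψ (c', g')) = c' := hΨcopy (c', g')
    have hc : c = c' := by rw [← h1, ← h2, h]
    subst hc
    have hval : ∀ a, (s c).1 (g.1 a) = (s c).1 (g'.1 a) := by
      intro a
      have := congrArg (fun z : Embs => z.1 a) h
      exact this
    have hg : g.1 = g'.1 := by
      apply Equiv.ext
      intro a
      exact (s c).1.injective (hval a)
    exact Prod.ext rfl (Subtype.ext hg)
  have hΨsurj : Function.Surjective Ψ := by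
    intro e
    set c := toCopy P B e with hc
    set e₀ := s c with he₀
    have h₀ : toCopy P B e₀ = toCopy P B e := hs c
    have hrange : Set.range e₀.1 = Set.range e.1 := congrArg (fun z => z.1.1) h₀
    have hrel : relOf P e₀.1 = relOf P e.1 := congrArg (fun z => z.1.2) h₀
    have hmem : ∀ a, e.1 a ∈ Set.range e₀.1 := by
      intro a; rw [hrange]; exact ⟨a, rfl⟩
    choose g hg using hmem
    have ginj : Function.Injective g := by
      intro a b hab
      apply e.1.injective
      rw [← hg a, ← hg b, hab]
    have gbij : Function.Bijective g := Finite.injective_iff_bijective.1 ginj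
    have hgP : ∀ a b, P a b ↔ P (Equiv.ofBijective g gbij a) (Equiv.ofBijective g gbij b) := by
      intro a b
      have h1 : P a b ↔ relOf P e.1 (e.1 a) (e.1 b) := (relOf_iff P e.1 a b).symm
      rw [h1, ← hrel, ← hg a, ← hg b]
      exact relOf_iff P e₀.1 (g a) (g b)
    refine ⟨(c, ⟨Equiv.ofBijective g gbij, hgP⟩), ?_⟩
    apply Subtype.ext
    apply DFunLike.ext
    intro a
    exact hg a
  have hcard : Nat.card Embs = Nat.card (Cop × AutP) :=
    Nat.card_congr (Equiv.ofBijective Ψ ⟨hΨinj, hΨsurj⟩).symm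
  rw [hcard, Nat.card_prod]
  rfl

section Fam
variable {V : Type} [Fintype V] [DecidableEq V]


private noncomputable def rk : Option V → ℕ
  | none => 0
  | some v => (Fintype.equivFin V v : ℕ) + 1

private lemma rk_inj : Function.Injective (rk (V := V)) := by
  intro x y h
  cases x with
  | none => cases y with
    | none => rfl
    | some v => simp [rk] at h
  | some v => cases y with
    | none => simp [rk] at h
    | some w =>
      simp only [rk, Nat.add_right_cancel_iff] at h
      have := (Fintype.equivFin V).injective (Fin.ext h)
      rw [this]

private noncomputable def Btor (t : Option V × Option V → Bool) : Option V → Option V → Prop :=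
  fun a b => (rk a < rk b ∧ t (a, b) = true) ∨ (rk b < rk a ∧ t (b, a) = false)

private noncomputable def kpair (x y : Option V) : Option V × Option V :=
  if rk x < rk y then (x, y) else (y, x)

private noncomputable def kbit (x y : Option V) : Bool := decide (rk x < rk y)

private lemma Btor_iff (t : Option V × Option V → Bool) {x y : Option V} (h : x ≠ y) :
    Btor t x y ↔ t (kpair x y) = kbit x y := by
  have hne : rk x ≠ rk y := fun h' => h (rk_inj h')
  rcases Nat.lt_or_ge (rk x) (rk y) with hlt | hge
  · have h2 : ¬ rk y < rk x := by omega
    simp [Btor, kpair, kbit, hlt, h2]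
  · have hlt : rk y < rk x := by omega
    have h2 : ¬ rk x < rk y := by omega
    simp [Btor, kpair, kbit, hlt, h2]

private lemma Btor_isTournament (t : Option V × Option V → Bool) :
    IsTournament (Btor (V := V) t) := by
  constructor
  · intro v h
    rcases h with ⟨h, _⟩ | ⟨h, _⟩ <;> exact lt_irrefl _ h
  · intro u v huv
    have hne : rk u ≠ rk v := fun h' => huv (rk_inj h')
    rw [Btor_iff t huv, Btor_iff t (Ne.symm huv)]
    rcases Nat.lt_or_ge (rk u) (rk v) with hlt | hge
    · have h2 : ¬ rk v < rk u := by omega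
      simp [kpair, kbit, hlt, h2]
    · have hlt : rk v < rk u := by omega
      have h2 : ¬ rk u < rk v := by omega
      simp [kpair, kbit, hlt, h2]

private noncomputable def phi (x : ℚ) : Option V × Option V → Bool → ℚ := fun c b =>
  match c with
  | (none, some _) => (if b then (1 + x) else (1 - x)) / 2
  | (some _, none) => (if b then (1 - x) else (1 + x)) / 2
  | _ => 1 / 2

private lemma phi_sum (x : ℚ) (c : Option V × Option V) :
    phi x c true + phi x c false = 1 := by
  rcases c with ⟨_ | v, _ | w⟩ <;> simp [phi] <;> ring

private noncomputable def wt (x : ℚ) (t : Option V × Option V → Bool) : ℚ :=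
  ∏ c : Option V × Option V, phi x c (t c)

private noncomputable def arcs (P : V → V → Prop) : Finset (V × V) :=
  @Finset.filter _ (fun p => P p.1 p.2) (Classical.decPred _) Finset.univ

private lemma mem_arcs {P : V → V → Prop} {p : V × V} : p ∈ arcs P ↔ P p.1 p.2 := by
  simp [arcs]

private noncomputable def kp (e : V ↪ Option V) (p : V × V) : Option V × Option V :=
  kpair (e p.1) (e p.2)

private noncomputable def kb (e : V ↪ Option V) (p : V × V) : Bool :=
  kbit (e p.1) (e p.2)

private noncomputable def valArc (x : ℚ) (e : V ↪ Option V) (p : V × V) : ℚ :=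
  phi x (kp e p) (kb e p)

private lemma rk_none_lt (v : V) : rk (none : Option V) < rk (some v) := by
  simp [rk]

private lemma val_out {x : ℚ} {e : V ↪ Option V} {p : V × V}
    (h1 : e p.1 = none) (h2 : e p.2 ≠ none) : valArc x e p = (1 + x) / 2 := by
  obtain ⟨v, hv⟩ := Option.ne_none_iff_exists'.mp h2
  unfold valArc kp kb kpair kbit
  rw [h1, hv]
  simp [rk_none_lt v, phi]

private lemma val_in {x : ℚ} {e : V ↪ Option V} {p : V × V}
    (h1 : e p.1 ≠ none) (h2 : e p.2 = none) : valArc x e p = (1 - x) / 2 := by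
  obtain ⟨v, hv⟩ := Option.ne_none_iff_exists'.mp h1
  unfold valArc kp kb kpair kbit
  rw [hv, h2]
  have : ¬ rk (some v) < rk (none : Option V) := by simp [rk]
  simp [this, phi]

private lemma val_mid {x : ℚ} {e : V ↪ Option V} {p : V × V}
    (h1 : e p.1 ≠ none) (h2 : e p.2 ≠ none) : valArc x e p = 1 / 2 := by
  obtain ⟨v, hv⟩ := Option.ne_none_iff_exists'.mp h1
  obtain ⟨w, hw⟩ := Option.ne_none_iff_exists'.mp h2
  unfold valArc kp kb kpair kbit
  rw [hv, hw]
  by_cases h : rk (some v) < rk (some w) <;> simp [h, phi]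

private lemma cond_iff {P : V → V → Prop} (hP : ∀ a b, P a b → ¬ P b a)
    (e : V ↪ Option V) (t : Option V × Option V → Bool) :
    (∀ a b, P a b → Btor t (e a) (e b)) ↔ ∀ p ∈ arcs P, t (kp e p) = kb e p := by
  constructor
  · intro h p hp
    have hPp := mem_arcs.1 hp
    have hne : p.1 ≠ p.2 := fun he => hP _ _ (he ▸ hPp) (he ▸ hPp)
    exact (Btor_iff t (fun hh => hne (e.injective hh))).1 (h p.1 p.2 hPp)
  · intro h a b hab
    have hp : (a, b) ∈ arcs P := mem_arcs.2 hab
    have hne : a ≠ b := fun he => hP _ _ (he ▸ hab) (he ▸ hab)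
    exact (Btor_iff t (fun hh => hne (e.injective hh))).2 (h _ hp)

private lemma kp_injOn {P : V → V → Prop} (hP : ∀ a b, P a b → ¬ P b a)
    (e : V ↪ Option V) : ∀ p ∈ arcs P, ∀ p' ∈ arcs P, kp e p = kp e p' → p = p' := by
  intro p hp p' hp' h
  have h1 := mem_arcs.1 hp
  have h2 := mem_arcs.1 hp'
  unfold kp kpair at h
  have key : (e p.1 = e p'.1 ∧ e p.2 = e p'.2) ∨ (e p.1 = e p'.2 ∧ e p.2 = e p'.1) := by
    split_ifs at h <;> simp only [Prod.mk.injEq] at h <;> tauto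
  rcases key with ⟨ha, hb⟩ | ⟨ha, hb⟩
  · exact Prod.ext (e.injective ha) (e.injective hb)
  · exfalso
    have ea : p.1 = p'.2 := e.injective ha
    have eb : p.2 = p'.1 := e.injective hb
    exact hP _ _ h1 (by rw [eb, ea]; exact h2)

private noncomputable def fco (x : ℚ) (P : V → V → Prop) (e : V ↪ Option V)
    (c : Option V × Option V) (b : Bool) : ℚ :=
  phi x c b * ∏ p ∈ (arcs P).filter (fun p => kp e p = c), (if b = kb e p then (1:ℚ) else 0)

open Classical in
private lemma sum_t (x : ℚ) {P : V → V → Prop} (hP : ∀ a b, P a b → ¬ P b a)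
    (e : V ↪ Option V) :
    ∑ t : Option V × Option V → Bool,
      wt x t * (if (∀ a b, P a b → Btor t (e a) (e b)) then (1:ℚ) else 0)
    = ∏ p ∈ arcs P, valArc x e p := by
  classical
  have key : ∀ t : Option V × Option V → Bool,
      wt x t * (if (∀ a b, P a b → Btor t (e a) (e b)) then (1:ℚ) else 0)
      = ∏ c : Option V × Option V, fco x P e c (t c) := by
    intro t
    unfold fco
    rw [Finset.prod_mul_distrib]
    unfold wt
    congr 1
    have h1 : ∀ c : Option V × Option V,
        (∏ p ∈ (arcs P).filter (fun p => kp e p = c), (if (t c) = kb e p then (1:ℚ) else 0))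
        = ∏ p ∈ (arcs P).filter (fun p => kp e p = c), (if t (kp e p) = kb e p then (1:ℚ) else 0) :=
      fun c => Finset.prod_congr rfl (fun p hp => by rw [(Finset.mem_filter.1 hp).2])
    rw [Finset.prod_congr rfl (fun c _ => h1 c), Finset.prod_fiberwise, Finset.prod_boole]
    by_cases hcond : ∀ a b, P a b → Btor t (e a) (e b)
    · rw [if_pos hcond, if_pos ((cond_iff hP e t).1 hcond)]
    · rw [if_neg hcond, if_neg (fun hc => hcond ((cond_iff hP e t).2 hc))]
  rw [Finset.sum_congr rfl (fun t _ => key t)]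
  rw [← Fintype.piFinset_univ, ← Finset.prod_univ_sum]
  have h1 : ∀ c ∉ (arcs P).image (kp e), (∑ b : Bool, fco x P e c b) = 1 := by
    intro c hc
    have hemp : (arcs P).filter (fun p => kp e p = c) = ∅ := by
      rw [Finset.filter_eq_empty_iff]
      intro p hp hkp
      exact hc (Finset.mem_image.2 ⟨p, hp, hkp⟩)
    rw [Fintype.sum_bool]
    simp only [fco, hemp, Finset.prod_empty, mul_one]
    exact phi_sum x c
  have h2 : ∀ p ∈ arcs P, (∑ b : Bool, fco x P e (kp e p) b) = valArc x e p := by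
    intro p hp
    have hsing : (arcs P).filter (fun q => kp e q = kp e p) = {p} := by
      apply Finset.eq_singleton_iff_unique_mem.2
      refine ⟨Finset.mem_filter.2 ⟨hp, rfl⟩, ?_⟩
      intro q hq
      exact kp_injOn hP e q (Finset.mem_filter.1 hq).1 p hp (Finset.mem_filter.1 hq).2
    rw [Fintype.sum_bool]
    simp only [fco, hsing, Finset.prod_singleton, valArc]
    cases hkb : kb e p <;> simp [hkb]
  calc (∏ c : Option V × Option V, ∑ b : Bool, fco x P e c b)
      = ∏ c ∈ (arcs P).image (kp e), ∑ b : Bool, fco x P e c b :=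
        (Finset.prod_subset (Finset.subset_univ _) (fun c _ hc => h1 c hc)).symm
    _ = ∏ p ∈ arcs P, ∑ b : Bool, fco x P e (kp e p) b :=
        Finset.prod_image (kp_injOn hP e)
    _ = ∏ p ∈ arcs P, valArc x e p := Finset.prod_congr rfl h2

open Classical in
private lemma natCard_filter {α : Type} [Fintype α] (p : α → Prop) :
    Nat.card {x // p x} = (Finset.univ.filter p).card := by
  rw [Nat.card_eq_fintype_card, Fintype.card_subtype]

private lemma prod_val_avoid (x : ℚ) (P : V → V → Prop) {e : V ↪ Option V}
    (h : ∀ u : V, e u ≠ none) :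
    ∏ p ∈ arcs P, valArc x e p = (1/2 : ℚ) ^ (arcs P).card := by
  rw [Finset.prod_congr rfl (fun p _ => val_mid (h p.1) (h p.2)), Finset.prod_const]

open Classical in
private lemma prod_val_hit (x : ℚ) {P : V → V → Prop} (hP : ∀ a b, P a b → ¬ P b a)
    {e : V ↪ Option V} {u : V} (hu : e u = none) :
    ∏ p ∈ arcs P, valArc x e p
      = (1 + x) ^ (Nat.card {v // P u v}) * (1 - x) ^ (Nat.card {v // P v u})
        * (1/2 : ℚ) ^ (arcs P).card := by
  classical
  set s1 := (arcs P).filter (fun p => p.1 = u) with hs1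
  set s' := (arcs P).filter (fun p => ¬ p.1 = u) with hs'
  set s2 := s'.filter (fun p => p.2 = u) with hs2
  set s3 := s'.filter (fun p => ¬ p.2 = u) with hs3
  have hnid : ∀ p : V × V, p ∈ arcs P → p.1 ≠ p.2 := by
    intro p hp
    have hPp := mem_arcs.1 hp
    exact fun he => hP _ _ (he ▸ hPp) (he ▸ hPp)
  have hnone : ∀ w : V, e w = none → w = u := by
    intro w hw
    exact e.injective (hw.trans hu.symm)
  have v1 : ∀ p ∈ s1, valArc x e p = (1 + x)/2 := by
    intro p hp
    obtain ⟨hpa, hpu⟩ := Finset.mem_filter.1 hp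
    refine val_out (by rw [hpu]; exact hu) ?_
    intro hn
    exact hnid p hpa (hpu.trans (hnone _ hn).symm)
  have v2 : ∀ p ∈ s2, valArc x e p = (1 - x)/2 := by
    intro p hp
    obtain ⟨hps', hpu⟩ := Finset.mem_filter.1 hp
    obtain ⟨hpa, hp1⟩ := Finset.mem_filter.1 hps'
    refine val_in ?_ (by rw [hpu]; exact hu)
    intro hn
    exact hp1 (hnone _ hn)
  have v3 : ∀ p ∈ s3, valArc x e p = 1/2 := by
    intro p hp
    obtain ⟨hps', hpu⟩ := Finset.mem_filter.1 hp
    obtain ⟨hpa, hp1⟩ := Finset.mem_filter.1 hps'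
    exact val_mid (fun hn => hp1 (hnone _ hn)) (fun hn => hpu (hnone _ hn))
  have c1 : s1.card = Nat.card {v // P u v} := by
    rw [natCard_filter]
    apply Finset.card_bij (fun p _ => p.2)
    · intro p hp
      obtain ⟨hpa, hpu⟩ := Finset.mem_filter.1 hp
      exact Finset.mem_filter.2 ⟨Finset.mem_univ _, hpu ▸ mem_arcs.1 hpa⟩
    · intro p hp q hq hpq
      obtain ⟨_, hpu⟩ := Finset.mem_filter.1 hp
      obtain ⟨_, hqu⟩ := Finset.mem_filter.1 hq
      exact Prod.ext (hpu.trans hqu.symm) hpq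
    · intro v hv
      refine ⟨(u, v), Finset.mem_filter.2 ⟨mem_arcs.2 ?_, rfl⟩, rfl⟩
      exact (Finset.mem_filter.1 hv).2
  have c2 : s2.card = Nat.card {v // P v u} := by
    rw [natCard_filter]
    apply Finset.card_bij (fun p _ => p.1)
    · intro p hp
      obtain ⟨hps', hpu⟩ := Finset.mem_filter.1 hp
      obtain ⟨hpa, _⟩ := Finset.mem_filter.1 hps'
      exact Finset.mem_filter.2 ⟨Finset.mem_univ _, hpu ▸ mem_arcs.1 hpa⟩
    · intro p hp q hq hpq
      obtain ⟨_, hpu⟩ := Finset.mem_filter.1 hp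
      obtain ⟨_, hqu⟩ := Finset.mem_filter.1 hq
      exact Prod.ext hpq (hpu.trans hqu.symm)
    · intro v hv
      have hPvu : P v u := (Finset.mem_filter.1 hv).2
      have hvu : v ≠ u := fun he => hP _ _ (he ▸ hPvu) (he ▸ hPvu)
      exact ⟨(v, u), Finset.mem_filter.2 ⟨Finset.mem_filter.2 ⟨mem_arcs.2 hPvu, hvu⟩, rfl⟩, rfl⟩
  have hsplit : (arcs P).card = s1.card + (s2.card + s3.card) := by
    rw [hs2, hs3, Finset.card_filter_add_card_filter_not, hs1, hs']
    rw [Finset.card_filter_add_card_filter_not]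
  have hprod : ∏ p ∈ arcs P, valArc x e p
      = ((1+x)/2) ^ s1.card * (((1-x)/2) ^ s2.card * (1/2 : ℚ) ^ s3.card) := by
    rw [← Finset.prod_filter_mul_prod_filter_not (arcs P) (fun p => p.1 = u) (valArc x e)]
    rw [← Finset.prod_filter_mul_prod_filter_not s' (fun p => p.2 = u) (valArc x e)]
    rw [Finset.prod_congr rfl v1, Finset.prod_congr rfl v2, Finset.prod_congr rfl v3]
    rw [Finset.prod_const, Finset.prod_const, Finset.prod_const]
  rw [hprod, ← c1, ← c2, hsplit]
  rw [div_pow, div_pow, div_pow, one_pow, pow_add, pow_add]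
  field_simp
  simp only [one_div, inv_pow]
  field_simp

private noncomputable def cls (e : V ↪ Option V) : Option V :=
  if h : ∃ u, e u = none then some (Classical.choose h) else none

private lemma cls_some {e : V ↪ Option V} {u : V} : cls e = some u ↔ e u = none := by
  unfold cls
  by_cases hex : ∃ w, e w = none
  · rw [dif_pos hex]
    have hspec := Classical.choose_spec hex
    constructor
    · intro h
      have hc : Classical.choose hex = u := by injection h
      rw [← hc]; exact hspec
    · intro hu
      have hc : Classical.choose hex = u := e.injective (hspec.trans hu.symm)
      rw [hc]
  · rw [dif_neg hex]
    constructor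
    · intro h; cases h
    · intro hu; exact absurd ⟨u, hu⟩ hex

private lemma cls_none {e : V ↪ Option V} : cls e = none ↔ ∀ u, e u ≠ none := by
  constructor
  · intro h u hu
    unfold cls at h
    rw [dif_pos ⟨u, hu⟩] at h
    simp at h
  · intro h
    unfold cls
    rw [dif_neg]
    rintro ⟨u, hu⟩
    exact h u hu

open Classical in
private lemma S_eval (x : ℚ) {P : V → V → Prop} (hP : ∀ a b, P a b → ¬ P b a) :
    ∑ t : Option V × Option V → Bool,
      wt x t * (Nat.card {e : V ↪ Option V // ∀ a b, P a b → Btor t (e a) (e b)} : ℚ)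
    = (1/2 : ℚ) ^ (arcs P).card *
      (((Finset.univ.filter (fun e : V ↪ Option V => ∀ u : V, e u ≠ none)).card : ℚ)
        + ∑ u : V, ((Finset.univ.filter (fun e : V ↪ Option V => e u = none)).card : ℚ)
            * ((1 + x) ^ (Nat.card {v // P u v}) * (1 - x) ^ (Nat.card {v // P v u}))) := by
  classical
  have step1 : ∀ t : Option V × Option V → Bool,
      wt x t * (Nat.card {e : V ↪ Option V // ∀ a b, P a b → Btor t (e a) (e b)} : ℚ)
      = ∑ e : V ↪ Option V, wt x t * (if (∀ a b, P a b → Btor t (e a) (e b)) then (1:ℚ) else 0) := by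
    intro t
    have hc : (Nat.card {e : V ↪ Option V // ∀ a b, P a b → Btor t (e a) (e b)} : ℚ)
        = ∑ e : V ↪ Option V, (if (∀ a b, P a b → Btor t (e a) (e b)) then (1:ℚ) else 0) := by
      rw [natCard_filter, Finset.sum_boole]
      congr!
    rw [hc, Finset.mul_sum]
  rw [Finset.sum_congr rfl (fun t _ => step1 t), Finset.sum_comm]
  rw [Finset.sum_congr rfl (fun e _ => sum_t x hP e)]
  rw [← Finset.sum_fiberwise Finset.univ cls (fun e => ∏ p ∈ arcs P, valArc x e p)]
  rw [Fintype.sum_option]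
  have hfib0 : ∑ e ∈ Finset.univ.filter (fun e => cls e = none), ∏ p ∈ arcs P, valArc x e p
      = ((Finset.univ.filter (fun e : V ↪ Option V => ∀ u : V, e u ≠ none)).card : ℚ)
        * (1/2 : ℚ) ^ (arcs P).card := by
    rw [Finset.sum_congr rfl (fun e he => prod_val_avoid x P (cls_none.1 (Finset.mem_filter.1 he).2))]
    rw [Finset.sum_const, nsmul_eq_mul]
    congr 1
    exact_mod_cast congrArg Finset.card (Finset.filter_congr (fun e _ => cls_none))
  have hfibu : ∀ u : V,
      ∑ e ∈ Finset.univ.filter (fun e => cls e = some u), ∏ p ∈ arcs P, valArc x e p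
      = ((Finset.univ.filter (fun e : V ↪ Option V => e u = none)).card : ℚ)
        * ((1 + x) ^ (Nat.card {v // P u v}) * (1 - x) ^ (Nat.card {v // P v u})
            * (1/2 : ℚ) ^ (arcs P).card) := by
    intro u
    rw [Finset.sum_congr rfl (fun e he => prod_val_hit x hP (cls_some.1 (Finset.mem_filter.1 he).2))]
    rw [Finset.sum_const, nsmul_eq_mul]
    rw [mul_assoc]
    congr 1
    exact_mod_cast congrArg Finset.card (Finset.filter_congr (fun e _ => cls_some))
  rw [hfib0, Finset.sum_congr rfl (fun u _ => hfibu u)]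
  rw [mul_add, Finset.mul_sum]
  congr 1
  · ring
  · apply Finset.sum_congr rfl
    intro u _
    ring

private lemma Nu_const (u u' : V) :
    (Finset.univ.filter (fun e : V ↪ Option V => e u = none)).card
      = (Finset.univ.filter (fun e : V ↪ Option V => e u' = none)).card := by
  classical
  apply Finset.card_bij' (fun e _ => (Equiv.swap u u').toEmbedding.trans e)
      (fun e _ => (Equiv.swap u u').toEmbedding.trans e)
  · intro e he
    apply Finset.mem_filter.2
    refine ⟨Finset.mem_univ _, ?_⟩
    simp only [Function.Embedding.trans_apply, Equiv.coe_toEmbedding, Equiv.swap_apply_right]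
    exact (Finset.mem_filter.1 he).2
  · intro e he
    apply Finset.mem_filter.2
    refine ⟨Finset.mem_univ _, ?_⟩
    simp only [Function.Embedding.trans_apply, Equiv.coe_toEmbedding, Equiv.swap_apply_left]
    exact (Finset.mem_filter.1 he).2
  · intro e _
    ext a
    simp
  · intro e _
    ext a
    simp

private lemma Nu_pos (u : V) :
    0 < (Finset.univ.filter (fun e : V ↪ Option V => e u = none)).card := by
  classical
  apply Finset.card_pos.2
  refine ⟨⟨fun v => if v = u then none else some v, ?_⟩, ?_⟩
  · intro v w h
    by_cases hv : v = u <;> by_cases hw : w = u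
    · rw [hv, hw]
    · simp [hv, hw] at h
    · simp [hv, hw] at h
    · simpa [hv, hw] using h
  · apply Finset.mem_filter.2
    exact ⟨Finset.mem_univ _, if_pos rfl⟩

private lemma arcs_rev_card (P : V → V → Prop) :
    (arcs (fun a b => P b a)).card = (arcs P).card := by
  apply Finset.card_bij' (fun p _ => Prod.swap p) (fun p _ => Prod.swap p)
  · intro p hp
    exact mem_arcs.2 (show P p.2 p.1 from mem_arcs.1 hp)
  · intro p hp
    exact mem_arcs.2 (show P p.1 p.2 from mem_arcs.1 hp)
  · intro p _; simp
  · intro p _; simp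

private lemma coeff_pow_mul (o i Δ : ℕ) (h : o + i ≤ Δ) :
    ((1 + Polynomial.X : Polynomial ℚ) ^ o * (1 - Polynomial.X) ^ i).coeff Δ
      = if o + i = Δ then (-1 : ℚ)^i else 0 := by
  have h1 : (1 + Polynomial.X : Polynomial ℚ) = Polynomial.X + Polynomial.C 1 := by
    rw [Polynomial.C_1, add_comm]
  have h2 : (1 - Polynomial.X : Polynomial ℚ) = -(Polynomial.X - Polynomial.C 1) := by
    rw [Polynomial.C_1]; ring
  have d1 : (1 + Polynomial.X : Polynomial ℚ).natDegree = 1 := by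
    rw [h1, Polynomial.natDegree_X_add_C]
  have d2 : (1 - Polynomial.X : Polynomial ℚ).natDegree = 1 := by
    rw [h2, Polynomial.natDegree_neg, Polynomial.natDegree_X_sub_C]
  have m1 : ((1 + Polynomial.X : Polynomial ℚ)^o).natDegree = o := by
    rw [Polynomial.natDegree_pow, d1, mul_one]
  have m2 : ((1 - Polynomial.X : Polynomial ℚ)^i).natDegree = i := by
    rw [Polynomial.natDegree_pow, d2, mul_one]
  have l1 : ((1 + Polynomial.X : Polynomial ℚ)^o).leadingCoeff = 1 := by
    rw [h1]
    exact ((Polynomial.monic_X_add_C (1:ℚ)).pow o).leadingCoeff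
  have l2 : ((1 - Polynomial.X : Polynomial ℚ)^i).leadingCoeff = (-1 : ℚ)^i := by
    rw [h2, Polynomial.leadingCoeff_pow, Polynomial.leadingCoeff_neg,
      (Polynomial.monic_X_sub_C (1:ℚ)).leadingCoeff]
  by_cases he : o + i = Δ
  · rw [if_pos he]
    have key := Polynomial.coeff_mul_degree_add_degree
      ((1 + Polynomial.X : Polynomial ℚ)^o) ((1 - Polynomial.X)^i)
    rw [m1, m2, l1, l2, one_mul, he] at key
    exact key
  · rw [if_neg he]
    apply Polynomial.coeff_eq_zero_of_natDegree_lt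
    have := Polynomial.natDegree_mul_le (p := (1 + Polynomial.X : Polynomial ℚ)^o)
      (q := (1 - Polynomial.X)^i)
    rw [m1, m2] at this
    omega

private lemma parity_contra {α : Type} {s : Finset α} (f : α → ℕ) (ho : Odd s.card)
    (h : ∑ u ∈ s, (-1 : ℚ)^(f u) = 0) : False := by
  have hz : ∑ u ∈ s, (-1 : ℤ)^(f u) = 0 := by
    have : ((∑ u ∈ s, (-1 : ℤ)^(f u) : ℤ) : ℚ) = 0 := by push_cast; exact h
    exact_mod_cast this
  have hmod : ∀ u ∈ s, (-1 : ℤ)^(f u) % 2 = 1 := by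
    intro u _
    rcases Nat.even_or_odd (f u) with he | ho
    · rw [he.neg_one_pow]; decide
    · rw [ho.neg_one_pow]; decide
  have := Finset.sum_int_mod s 2 (fun u => (-1 : ℤ)^(f u))
  rw [hz, Finset.sum_congr rfl hmod] at this
  simp only [Finset.sum_const, nsmul_eq_mul, mul_one] at this
  rcases ho with ⟨k, hk⟩
  rw [hk] at this
  push_cast at this
  omega

end Fam

/-- If `G` has odd maximum degree at least 3 attained by an odd number of
vertices, then no orientation of `G` is converse invariant. -/
theorem stmt_10 {V : Type} [Fintype V] [DecidableEq V]
    (G : SimpleGraph V) [DecidableRel G.Adj]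
    (hΔodd : Odd G.maxDegree) (hΔ : 3 ≤ G.maxDegree)
    (hodd : Odd (Finset.univ.filter fun v => G.degree v = G.maxDegree).card)
    (A : V → V → Prop) (hor : IsOrientation G A) :
    ¬ ConverseInvariant A := by
  classical
  intro hCI
  obtain ⟨horA, hadj⟩ := hor
  -- degree identity
  have hdeg : ∀ u : V, Nat.card {v // A u v} + Nat.card {v // A v u} = G.degree u := by
    intro u
    rw [natCard_filter, natCard_filter, SimpleGraph.degree]
    have hnb : G.neighborFinset u
        = Finset.univ.filter (fun v => A u v) ∪ Finset.univ.filter (fun v => A v u) := by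
      ext v
      simp only [SimpleGraph.mem_neighborFinset, Finset.mem_union, Finset.mem_filter,
        Finset.mem_univ, true_and]
      exact hadj u v
    rw [hnb, Finset.card_union_of_disjoint]
    rw [Finset.disjoint_left]
    intro v hv hv'
    exact horA u v (Finset.mem_filter.1 hv).2 (Finset.mem_filter.1 hv').2
  -- embedding-count equality for every tournament in the family
  have hemb : ∀ t : Option V × Option V → Bool,
      Nat.card {e : V ↪ Option V // ∀ a b, A a b → Btor t (e a) (e b)}
      = Nat.card {e : V ↪ Option V // ∀ a b, A b a → Btor t (e a) (e b)} := by
    intro t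
    have e1 := emb_card_eq A (Btor t)
    have e2 : Nat.card {e : V ↪ Option V // ∀ a b, A b a → Btor t (e a) (e b)}
        = copyCount (fun a b => A b a) (Btor t)
          * Nat.card {g : V ≃ V // ∀ a b, A b a ↔ A (g b) (g a)} :=
      emb_card_eq (fun a b => A b a) (Btor t)
    have e3 : copyCount A (Btor t) = copyCount (fun a b => A b a) (Btor t) :=
      hCI (Option V) inferInstance (Btor t) (Btor_isTournament t)
    rw [e1, e2, ← e3]
    congr 1
    exact Nat.card_congr (Equiv.subtypeEquivRight fun g =>
      ⟨fun h a b => h b a, fun h a b => h b a⟩)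
  -- weighted sums coincide, hence the degree-polynomial identity
  have horA' : ∀ a b : V, A b a → ¬ A a b := fun a b h h' => horA b a h h'
  have key : ∀ x : ℚ,
      ((Finset.univ.filter (fun e : V ↪ Option V => ∀ u : V, e u ≠ none)).card : ℚ)
        + ∑ u : V, ((Finset.univ.filter (fun e : V ↪ Option V => e u = none)).card : ℚ)
            * ((1 + x) ^ (Nat.card {v // A u v}) * (1 - x) ^ (Nat.card {v // A v u}))
      = ((Finset.univ.filter (fun e : V ↪ Option V => ∀ u : V, e u ≠ none)).card : ℚ)
        + ∑ u : V, ((Finset.univ.filter (fun e : V ↪ Option V => e u = none)).card : ℚ)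
            * ((1 + x) ^ (Nat.card {v // A v u}) * (1 - x) ^ (Nat.card {v // A u v})) := by
    intro x
    have s1 := S_eval (V := V) x horA
    have s2 : ∑ t : Option V × Option V → Bool,
        wt x t * (Nat.card {e : V ↪ Option V // ∀ a b, A b a → Btor t (e a) (e b)} : ℚ)
      = (1/2 : ℚ) ^ (arcs (fun a b : V => A b a)).card *
        (((Finset.univ.filter (fun e : V ↪ Option V => ∀ u : V, e u ≠ none)).card : ℚ)
          + ∑ u : V, ((Finset.univ.filter (fun e : V ↪ Option V => e u = none)).card : ℚ)
              * ((1 + x) ^ (Nat.card {v // A v u}) * (1 - x) ^ (Nat.card {v // A u v}))) :=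
      S_eval (V := V) x (P := fun a b => A b a) horA'
    have hL : ∑ t : Option V × Option V → Bool,
        wt x t * (Nat.card {e : V ↪ Option V // ∀ a b, A a b → Btor t (e a) (e b)} : ℚ)
      = ∑ t : Option V × Option V → Bool,
        wt x t * (Nat.card {e : V ↪ Option V // ∀ a b, A b a → Btor t (e a) (e b)} : ℚ) :=
      Finset.sum_congr rfl fun t _ => by rw [hemb t]
    have hcomb := s1.symm.trans (hL.trans s2)
    rw [arcs_rev_card] at hcomb
    exact mul_left_cancel₀ (pow_ne_zero _ (by norm_num)) hcomb
  have hsum : ∀ x : ℚ,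
      ∑ u : V, ((Finset.univ.filter (fun e : V ↪ Option V => e u = none)).card : ℚ)
          * ((1 + x) ^ (Nat.card {v // A u v}) * (1 - x) ^ (Nat.card {v // A v u}))
      = ∑ u : V, ((Finset.univ.filter (fun e : V ↪ Option V => e u = none)).card : ℚ)
          * ((1 + x) ^ (Nat.card {v // A v u}) * (1 - x) ^ (Nat.card {v // A u v})) :=
    fun x => add_left_cancel (key x)
  -- pick a max-degree vertex
  have hpos : 0 < (Finset.univ.filter fun v => G.degree v = G.maxDegree).card := by
    rcases hodd with ⟨k, hk⟩
    omega
  obtain ⟨u0, hu0⟩ := Finset.card_pos.1 hpos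
  -- replace the weights by a common positive constant
  have hNu : ∀ u : V, ((Finset.univ.filter (fun e : V ↪ Option V => e u = none)).card : ℚ)
      = ((Finset.univ.filter (fun e : V ↪ Option V => e u0 = none)).card : ℚ) := by
    intro u
    exact_mod_cast Nu_const u u0
  have hN0 : ((Finset.univ.filter (fun e : V ↪ Option V => e u0 = none)).card : ℚ) ≠ 0 := by
    have := Nu_pos (u0 : V)
    positivity
  have hsum2 : ∀ x : ℚ,
      ∑ u : V, ((1 + x) ^ (Nat.card {v // A u v}) * (1 - x) ^ (Nat.card {v // A v u}))
      = ∑ u : V, ((1 + x) ^ (Nat.card {v // A v u}) * (1 - x) ^ (Nat.card {v // A u v})) := by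
    intro x
    have h := hsum x
    have hl : ∑ u : V, ((Finset.univ.filter (fun e : V ↪ Option V => e u = none)).card : ℚ)
          * ((1 + x) ^ (Nat.card {v // A u v}) * (1 - x) ^ (Nat.card {v // A v u}))
        = ((Finset.univ.filter (fun e : V ↪ Option V => e u0 = none)).card : ℚ)
          * ∑ u : V, ((1 + x) ^ (Nat.card {v // A u v}) * (1 - x) ^ (Nat.card {v // A v u})) := by
      rw [Finset.mul_sum]
      exact Finset.sum_congr rfl fun u _ => by rw [hNu u]
    have hr : ∑ u : V, ((Finset.univ.filter (fun e : V ↪ Option V => e u = none)).card : ℚ)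
          * ((1 + x) ^ (Nat.card {v // A v u}) * (1 - x) ^ (Nat.card {v // A u v}))
        = ((Finset.univ.filter (fun e : V ↪ Option V => e u0 = none)).card : ℚ)
          * ∑ u : V, ((1 + x) ^ (Nat.card {v // A v u}) * (1 - x) ^ (Nat.card {v // A u v})) := by
      rw [Finset.mul_sum]
      exact Finset.sum_congr rfl fun u _ => by rw [hNu u]
    rw [hl, hr] at h
    exact mul_left_cancel₀ hN0 h
  -- pass to polynomials
  have hQ : (∑ u : V, (1 + Polynomial.X : Polynomial ℚ) ^ (Nat.card {v // A u v})
        * (1 - Polynomial.X) ^ (Nat.card {v // A v u}))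
      = ∑ u : V, (1 + Polynomial.X : Polynomial ℚ) ^ (Nat.card {v // A v u})
        * (1 - Polynomial.X) ^ (Nat.card {v // A u v}) := by
    apply Polynomial.funext
    intro x
    have h := hsum2 x
    simp only [Polynomial.eval_finset_sum, Polynomial.eval_mul, Polynomial.eval_pow,
      Polynomial.eval_add, Polynomial.eval_sub, Polynomial.eval_one, Polynomial.eval_X]
    exact h
  -- compare coefficients in degree Δ
  have hdegle : ∀ u : V, Nat.card {v // A u v} + Nat.card {v // A v u} ≤ G.maxDegree := by
    intro u
    rw [hdeg u]
    exact G.degree_le_maxDegree u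
  have hcoeff := congrArg (fun p : Polynomial ℚ => p.coeff G.maxDegree) hQ
  simp only [Polynomial.finset_sum_coeff] at hcoeff
  rw [Finset.sum_congr rfl (fun u _ => coeff_pow_mul _ _ _ (hdegle u)),
      Finset.sum_congr rfl (fun u _ => coeff_pow_mul _ _ _ (by rw [add_comm]; exact hdegle u))]
      at hcoeff
  have hif1 : ∀ u : V,
      (if Nat.card {v // A u v} + Nat.card {v // A v u} = G.maxDegree
        then (-1 : ℚ) ^ (Nat.card {v // A v u}) else 0)
      = if G.degree u = G.maxDegree then (-1 : ℚ) ^ (Nat.card {v // A v u}) else 0 :=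
    fun u => if_congr (by rw [hdeg u]) rfl rfl
  have hif2 : ∀ u : V,
      (if Nat.card {v // A v u} + Nat.card {v // A u v} = G.maxDegree
        then (-1 : ℚ) ^ (Nat.card {v // A u v}) else 0)
      = if G.degree u = G.maxDegree then (-1 : ℚ) ^ (Nat.card {v // A u v}) else 0 :=
    fun u => if_congr (by rw [add_comm, hdeg u]) rfl rfl
  rw [Finset.sum_congr rfl (fun u _ => hif1 u), Finset.sum_congr rfl (fun u _ => hif2 u),
      ← Finset.sum_filter, ← Finset.sum_filter] at hcoeff
  -- flip signs on the right
  have hflip : ∀ u ∈ (Finset.univ.filter fun v => G.degree v = G.maxDegree),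
      (-1 : ℚ) ^ (Nat.card {v // A u v}) = -(-1 : ℚ) ^ (Nat.card {v // A v u}) := by
    intro u hu
    have hd : Nat.card {v // A u v} + Nat.card {v // A v u} = G.maxDegree := by
      rw [hdeg u]; exact (Finset.mem_filter.1 hu).2
    have hoddsum : Odd (Nat.card {v // A u v} + Nat.card {v // A v u}) := by
      rw [hd]; exact hΔodd
    rcases Nat.even_or_odd (Nat.card {v // A v u}) with he | ho
    · have h1 : Odd (Nat.card {v // A u v}) := by
        rcases hoddsum with ⟨k, hk⟩
        rcases he with ⟨m, hm⟩
        exact ⟨k - m, by omega⟩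
      rw [h1.neg_one_pow, he.neg_one_pow]
    · have h1 : Even (Nat.card {v // A u v}) := by
        rcases hoddsum with ⟨k, hk⟩
        rcases ho with ⟨m, hm⟩
        exact ⟨k - m, by omega⟩
      rw [h1.neg_one_pow, ho.neg_one_pow]
      norm_num
  rw [Finset.sum_congr rfl hflip, Finset.sum_neg_distrib] at hcoeff
  have hzero : ∑ u ∈ (Finset.univ.filter fun v => G.degree v = G.maxDegree),
      (-1 : ℚ) ^ (Nat.card {v // A v u}) = 0 := by linarith [hcoeff]
  exact parity_contra (fun u => Nat.card {v // A v u}) hodd hzero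
end
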